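/- arXiv:1411.3810 — 4 statements merged into one kernel-verified Lean document; each statement's English description precedes it below -/
import Mathlib

section
/- Let m, n ≥ 2 be integers, and let u ∈ ℝ^{m−1} and v ∈ ℝ^{n−1} be arbitrary vectors. Define the matrix Q ∈ ℝ^{m×n} by Q(k,l) = u(k)·v(l−1) − u(k−1)·v(l) for 1 ≤ k ≤ m, 1 ≤ l ≤ n, with the conventions u(0) = u(m) = 0 and v(0) = v(n) = 0. Then rank(Q) ≤ 2 and S_{(m,n)}(Q) = 0; i.e., Q lies in the rank-two null space N(S_{(m,n)}, 2). In particular, N0(m,n) ⊆ N(S_{(m,n)}, 2). -/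
open scoped BigOperators
open MeasureTheory

noncomputable section

/-- 1-based access into a vector `u ∈ ℝ^d`, with the convention that
out-of-range indices (including `0` and anything `> d`) give `0`. -/
def pad1 {d : ℕ} (u : Fin d → ℝ) (i : ℕ) : ℝ :=
  if h : 1 ≤ i ∧ i ≤ d then u ⟨i - 1, by omega⟩ else 0

/-- The lifted linear convolution map `S_{(m,n)} : ℝ^{m×n} → ℝ^{m+n-1}`,
summing the entries of a matrix along its anti-diagonals. -/
def liftS (m n : ℕ) (W : Matrix (Fin m) (Fin n) ℝ) : Fin (m + n - 1) → ℝ :=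
  fun l => ∑ k : Fin m, ∑ j : Fin n, if (k : ℕ) + (j : ℕ) = (l : ℕ) then W k j else 0

/-- Linear convolution `x ⋆ y ∈ ℝ^{m+n-1}` of `x ∈ ℝ^m` and `y ∈ ℝ^n`. -/
def conv {m n : ℕ} (x : Fin m → ℝ) (y : Fin n → ℝ) : Fin (m + n - 1) → ℝ :=
  fun l => ∑ k : Fin m, ∑ j : Fin n, if (k : ℕ) + (j : ℕ) = (l : ℕ) then x k * y j else 0

/-- The rank-two null space `N(S_{(m,n)}, 2)`. -/
def rankTwoNull (m n : ℕ) : Set (Matrix (Fin m) (Fin n) ℝ) :=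
  {Q | Q.rank ≤ 2 ∧ liftS m n Q = 0}

/-- The parametrized family `N0(m,n)`:
`Q(k,l) = u(k)·v(l−1) − u(k−1)·v(l)` (1-based, with zero-padding conventions). -/
def N0set (m n : ℕ) : Set (Matrix (Fin m) (Fin n) ℝ) :=
  {Q | ∃ (u : Fin (m - 1) → ℝ) (v : Fin (n - 1) → ℝ),
    ∀ (k : Fin m) (l : Fin n),
      Q k l = pad1 u ((k : ℕ) + 1) * pad1 v (l : ℕ) - pad1 u (k : ℕ) * pad1 v ((l : ℕ) + 1)}

/-- The recursively defined family `N2(m,n)`: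
`Q(k,l) = u₁(k)·v₁(l−1) + u₂(k−1)·v₂(l)` (1-based, with zero-padding conventions),
where `u₁v₁ᵀ + u₂v₂ᵀ ∈ N(S_{(m-1,n-1)}, 2) \ {0}`. -/
def N2set (m n : ℕ) : Set (Matrix (Fin m) (Fin n) ℝ) :=
  {Q | ∃ (u₁ u₂ : Fin (m - 1) → ℝ) (v₁ v₂ : Fin (n - 1) → ℝ),
    (Matrix.of fun i j => u₁ i * v₁ j + u₂ i * v₂ j) ∈ rankTwoNull (m - 1) (n - 1) ∧
    (Matrix.of fun i j => u₁ i * v₁ j + u₂ i * v₂ j) ≠ (0 : Matrix (Fin (m - 1)) (Fin (n - 1)) ℝ) ∧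
    ∀ (k : Fin m) (l : Fin n),
      Q k l = pad1 u₁ ((k : ℕ) + 1) * pad1 v₁ (l : ℕ) + pad1 u₂ (k : ℕ) * pad1 v₂ ((l : ℕ) + 1)}

/-- The exceptional set `M(m,n) = {Q ∈ N(S_{(m,n)}, 2) : Q(m,1) = 0 and Q(1,n) = 0}` (1-based). -/
def Mexc (m n : ℕ) (hm : 0 < m) (hn : 0 < n) : Set (Matrix (Fin m) (Fin n) ℝ) :=
  {Q | Q ∈ rankTwoNull m n ∧ Q ⟨m - 1, by omega⟩ ⟨0, hn⟩ = 0 ∧ Q ⟨0, hm⟩ ⟨n - 1, by omega⟩ = 0}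

/-- Identifiability of the pair `p = (x,y)` with respect to linear convolution
and the constraint set `K`. -/
def Identifiable {m n : ℕ} (K : Set ((Fin m → ℝ) × (Fin n → ℝ)))
    (p : (Fin m → ℝ) × (Fin n → ℝ)) : Prop :=
  ∀ q ∈ K, conv q.1 q.2 = conv p.1 p.2 →
    ∃ α : ℝ, α ≠ 0 ∧ q.1 = α • p.1 ∧ q.2 = (1 / α) • p.2

/-- The quotient set `Q∼(w,d)`: pairs `(w*, γ) ∈ ℝ^{d-1} × [0, 2π)` with
`w(j) = w*(j)·cos γ − w*(j−1)·sin γ` for `1 ≤ j ≤ d` (1-based, zero-padding conventions). -/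
def quotSet (d : ℕ) (w : Fin d → ℝ) : Set ((Fin (d - 1) → ℝ) × ℝ) :=
  {p | p.2 ∈ Set.Ico 0 (2 * Real.pi) ∧
    ∀ j : Fin d, w j = pad1 p.1 ((j : ℕ) + 1) * Real.cos p.2 - pad1 p.1 (j : ℕ) * Real.sin p.2}

/-- Matrices over `ℝ` carry the (product) metric space structure of `ℝ^{m×n}`. -/
instance {m n : ℕ} : MetricSpace (Matrix (Fin m) (Fin n) ℝ) :=
  show MetricSpace (Fin m → Fin n → ℝ) from inferInstance


lemma pad1_zero' {d : ℕ} (u : Fin d → ℝ) : pad1 u 0 = 0 := by simp [pad1]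

lemma pad1_ge' {d : ℕ} (u : Fin d → ℝ) {i : ℕ} (h : d < i) : pad1 u i = 0 := by
  rw [pad1, dif_neg]; omega

lemma antidiag_inner_sum (n l k : ℕ) (f : ℕ → ℝ) (F : ℝ)
    (h1 : k ≤ l → l - k < n → F = f (l - k))
    (h2 : l < k → F = 0) (h3 : n ≤ l - k → F = 0) :
    (∑ j : Fin n, if k + (j : ℕ) = l then f (j : ℕ) else 0) = F := by
  rw [Fin.sum_univ_eq_sum_range (fun j => if k + j = l then f j else 0)]
  have : ∀ j ∈ Finset.range n, (if k + j = l then f j else 0)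
      = if j = l - k then (if k ≤ l ∧ l - k < n then f (l - k) else 0) else 0 := by
    intro j hj
    simp only [Finset.mem_range] at hj
    by_cases hc : k + j = l
    · rw [if_pos hc, if_pos (by omega), if_pos ⟨by omega, by omega⟩]
      congr 1; omega
    · rw [if_neg hc]
      by_cases hc2 : j = l - k
      · rw [if_pos hc2, if_neg (by omega)]
      · rw [if_neg hc2]
  rw [Finset.sum_congr rfl this, Finset.sum_ite_eq' (Finset.range n)]
  by_cases h4 : l - k < n
  · rw [if_pos (Finset.mem_range.mpr h4)]
    by_cases h5 : k ≤ l
    · rw [if_pos ⟨h5, h4⟩]; exact (h1 h5 h4).symm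
    · rw [if_neg (by omega)]; exact (h2 (by omega)).symm
  · rw [if_neg (by simp; omega)]; exact (h3 (by omega)).symm

lemma stmt0_main (m n : ℕ) (hm : 2 ≤ m) (hn : 2 ≤ n)
    (u : Fin (m - 1) → ℝ) (v : Fin (n - 1) → ℝ) :
    (Matrix.of fun (k : Fin m) (l : Fin n) =>
        pad1 u ((k : ℕ) + 1) * pad1 v (l : ℕ) - pad1 u (k : ℕ) * pad1 v ((l : ℕ) + 1))
      ∈ rankTwoNull m n := by
  set U : ℕ → ℝ := pad1 u with hU
  set V : ℕ → ℝ := pad1 v with hV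
  have hU0 : U 0 = 0 := pad1_zero' u
  have hUge : ∀ i, m ≤ i → U i = 0 := fun i hi => pad1_ge' u (by omega)
  have hV0 : V 0 = 0 := pad1_zero' v
  have hVge : ∀ i, n ≤ i → V i = 0 := fun i hi => pad1_ge' v (by omega)
  constructor
  · -- rank ≤ 2
    set A : Matrix (Fin m) (Fin 2) ℝ :=
      Matrix.of fun k i => if i = (0 : Fin 2) then U ((k : ℕ) + 1) else -(U (k : ℕ)) with hA
    set B : Matrix (Fin 2) (Fin n) ℝ :=
      Matrix.of fun i l => if i = (0 : Fin 2) then V (l : ℕ) else V ((l : ℕ) + 1) with hB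
    have hfac : (Matrix.of fun (k : Fin m) (l : Fin n) =>
        U ((k : ℕ) + 1) * V (l : ℕ) - U (k : ℕ) * V ((l : ℕ) + 1)) = A * B := by
      ext k l
      rw [Matrix.mul_apply, Fin.sum_univ_two]
      simp [hA, hB]
      ring
    rw [hfac]
    calc (A * B).rank ≤ A.rank := Matrix.rank_mul_le_left A B
      _ ≤ Fintype.card (Fin 2) := Matrix.rank_le_card_width A
      _ = 2 := Fintype.card_fin 2
  · -- liftS = 0
    funext l
    simp only [liftS, Matrix.of_apply, Pi.zero_apply]
    set g : ℕ → ℝ := fun k => U k * V (l + 1 - k) with hg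
    have key : ∀ k : Fin m,
        (∑ j : Fin n, if (k : ℕ) + (j : ℕ) = (l : ℕ) then
            U ((k : ℕ) + 1) * V (j : ℕ) - U (k : ℕ) * V ((j : ℕ) + 1) else 0)
        = g ((k : ℕ) + 1) - g (k : ℕ) := by
      intro k
      have split : ∀ j : Fin n,
          (if (k : ℕ) + (j : ℕ) = (l : ℕ) then
            U ((k : ℕ) + 1) * V (j : ℕ) - U (k : ℕ) * V ((j : ℕ) + 1) else 0)
          = (if (k : ℕ) + (j : ℕ) = (l : ℕ) then U ((k : ℕ) + 1) * V (j : ℕ) else 0)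
            - (if (k : ℕ) + (j : ℕ) = (l : ℕ) then U (k : ℕ) * V ((j : ℕ) + 1) else 0) := by
        intro j; by_cases hc : (k : ℕ) + (j : ℕ) = (l : ℕ) <;> simp [hc]
      rw [Finset.sum_congr rfl (fun j _ => split j), Finset.sum_sub_distrib]
      congr 1
      · apply antidiag_inner_sum n l (k : ℕ) (fun j => U ((k : ℕ) + 1) * V j)
        · intro h1 h2
          simp only [hg]
          congr 2
          omega
        · intro h; simp only [hg]
          rw [show (l : ℕ) + 1 - ((k : ℕ) + 1) = 0 by omega, hV0, mul_zero]
        · intro h; simp only [hg]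
          rw [hVge ((l : ℕ) + 1 - ((k : ℕ) + 1)) (by omega), mul_zero]
      · apply antidiag_inner_sum n l (k : ℕ) (fun j => U (k : ℕ) * V (j + 1))
        · intro h1 h2
          simp only [hg]
          congr 2
          omega
        · intro h; simp only [hg]
          rw [show (l : ℕ) + 1 - (k : ℕ) = 0 by omega, hV0, mul_zero]
        · intro h; simp only [hg]
          rw [hVge ((l : ℕ) + 1 - (k : ℕ)) (by omega), mul_zero]
    rw [Finset.sum_congr rfl (fun k _ => key k),
      Fin.sum_univ_eq_sum_range (fun k => g (k + 1) - g k), Finset.sum_range_sub]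
    rw [hg]
    simp only []
    rw [hUge m le_rfl, hU0, zero_mul, zero_mul, sub_zero]

/-- the matrix `Q(k,l) = u(k)·v(l−1) − u(k−1)·v(l)` has rank at most 2 and
lies in the null space of `S_{(m,n)}`; in particular `N0(m,n) ⊆ N(S_{(m,n)}, 2)`. -/
theorem stmt0 (m n : ℕ) (hm : 2 ≤ m) (hn : 2 ≤ n)
    (u : Fin (m - 1) → ℝ) (v : Fin (n - 1) → ℝ) :
    (Matrix.of fun (k : Fin m) (l : Fin n) =>
        pad1 u ((k : ℕ) + 1) * pad1 v (l : ℕ) - pad1 u (k : ℕ) * pad1 v ((l : ℕ) + 1))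
      ∈ rankTwoNull m n ∧
    N0set m n ⊆ rankTwoNull m n := by
  refine ⟨stmt0_main m n hm hn u v, ?_⟩
  rintro Q ⟨u', v', h⟩
  have : Q = Matrix.of fun (k : Fin m) (l : Fin n) =>
      pad1 u' ((k : ℕ) + 1) * pad1 v' (l : ℕ) - pad1 u' (k : ℕ) * pad1 v' ((l : ℕ) + 1) := by
    ext k l; exact h k l
  rw [this]
  exact stmt0_main m n hm hn u' v'
end
end

section
/- For all integers m, n ≥ 3, there exists a set M ⊆ N(S_{(m,n)}, 2) ⊆ ℝ^{m×n} of Hausdorff dimension m + n − 3 such that no element of M belongs to N0(m,n) (i.e., no element of M is representable in the form Q(k,l) = u(k)·v(l−1) − u(k−1)·v(l) for any u ∈ ℝ^{m−1}, v ∈ ℝ^{n−1}). -/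
open scoped BigOperators
open MeasureTheory
open scoped NNReal ENNReal

noncomputable section

namespace Stmt1
lemma pad1_eq_zero {d : ℕ} (u : Fin d → ℝ) {i : ℕ} (h : i = 0 ∨ d < i) : pad1 u i = 0 := by
  unfold pad1; rw [dif_neg]; omega

abbrev Epar (m n : ℕ) : Type := (Fin (m-3) → ℝ) × (Fin (n-2) → ℝ) × ℝ × ℝ

def aA {m n : ℕ} (θ : Epar m n) (i : ℕ) : ℝ := if i = 1 then 1 else pad1 θ.1 (i-1)
def bB {m n : ℕ} (θ : Epar m n) (j : ℕ) : ℝ := pad1 θ.2.1 j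

def pR {m n : ℕ} (θ : Epar m n) (p q : ℕ) : ℝ :=
  aA θ p * bB θ q + θ.2.2.2 * (aA θ p * bB θ (q-1) + aA θ (p-1) * bB θ q)
    + θ.2.2.1 * (aA θ (p-1) * bB θ (q-1))

def Fp (m n : ℕ) (θ : Epar m n) : Fin m → Fin n → ℝ :=
  fun k l => pR θ ((k : ℕ)) ((l : ℕ)+1) - pR θ ((k : ℕ)+1) ((l : ℕ))

lemma aA_eq_zero {m n : ℕ} (hm : 3 ≤ m) (θ : Epar m n) {i : ℕ} (h : i = 0 ∨ m - 1 ≤ i) :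
    aA θ i = 0 := by
  unfold aA
  rw [if_neg (by omega)]
  exact pad1_eq_zero _ (by omega)

lemma bB_eq_zero {m n : ℕ} (θ : Epar m n) {j : ℕ} (h : j = 0 ∨ n - 1 ≤ j) : bB θ j = 0 := by
  unfold bB
  exact pad1_eq_zero _ (by omega)

lemma pR_zero_left {m n : ℕ} (hm : 3 ≤ m) (θ : Epar m n) {p : ℕ} (h : p = 0 ∨ m ≤ p) (q : ℕ) :
    pR θ p q = 0 := by
  unfold pR
  rw [aA_eq_zero hm θ (i := p) (by omega), aA_eq_zero hm θ (i := p - 1) (by omega)]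
  ring

lemma pR_zero_right {m n : ℕ} (θ : Epar m n) {q : ℕ} (h : q = 0 ∨ n ≤ q) (p : ℕ) :
    pR θ p q = 0 := by
  unfold pR
  rw [bB_eq_zero θ (j := q) (by omega), bB_eq_zero θ (j := q - 1) (by omega)]
  ring

/-- inner-sum extraction -/
lemma sum_range_diag (nn ll kk : ℕ) (f : ℕ → ℝ) :
    (∑ j ∈ Finset.range nn, if kk + j = ll then f j else 0)
      = if kk ≤ ll ∧ ll - kk < nn then f (ll - kk) else 0 := by
  by_cases h : kk ≤ ll ∧ ll - kk < nn
  · rw [if_pos h]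
    rw [Finset.sum_eq_single (ll - kk)]
    · rw [if_pos (by omega)]
    · intro j _ hj; rw [if_neg (by omega)]
    · intro hmem; exact absurd (Finset.mem_range.2 h.2) hmem
  · rw [if_neg h]
    apply Finset.sum_eq_zero
    intro j hj
    rw [Finset.mem_range] at hj
    rw [if_neg (by omega)]

lemma liftS_Fp (m n : ℕ) (hm : 3 ≤ m) (hn : 3 ≤ n) (θ : Epar m n) :
    liftS m n (Matrix.of (Fp m n θ)) = 0 := by
  funext l
  show (∑ k : Fin m, ∑ j : Fin n, if (k : ℕ) + (j : ℕ) = (l : ℕ) then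
      (pR θ ((k:ℕ)) ((j:ℕ)+1) - pR θ ((k:ℕ)+1) ((j:ℕ))) else 0) = 0
  set L : ℕ := (l : ℕ) with hL
  have hLlt : L < m + n - 1 := l.2
  -- h-function
  set h : ℕ → ℝ := fun K => pR θ K (L + 1 - K) with hh
  have key : ∀ (k j : ℕ), k + j = L →
      pR θ k (j+1) - pR θ (k+1) j = h k - h (k+1) := by
    intro k j hkj
    have h1 : L + 1 - k = j + 1 := by omega
    have h2 : L + 1 - (k+1) = j := by omega
    rw [hh]; dsimp only; rw [h1, h2]
  calc (∑ k : Fin m, ∑ j : Fin n, if (k : ℕ) + (j : ℕ) = L then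
      (pR θ ((k:ℕ)) ((j:ℕ)+1) - pR θ ((k:ℕ)+1) ((j:ℕ))) else 0)
      = ∑ k ∈ Finset.range m, ∑ j ∈ Finset.range n,
          (if k + j = L then (h k - h (k+1)) else 0) := by
        rw [Fin.sum_univ_eq_sum_range (fun k => ∑ j : Fin n, if (k : ℕ) + (j : ℕ) = L then
          (pR θ k ((j:ℕ)+1) - pR θ (k+1) ((j:ℕ))) else 0)]
        apply Finset.sum_congr rfl
        intro k _
        rw [Fin.sum_univ_eq_sum_range (fun j => if (k : ℕ) + j = L then
          (pR θ k (j+1) - pR θ (k+1) j) else 0)]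
        apply Finset.sum_congr rfl
        intro j _
        by_cases hkj : k + j = L
        · rw [if_pos hkj, if_pos hkj, key k j hkj]
        · rw [if_neg hkj, if_neg hkj]
    _ = ∑ k ∈ Finset.range m, (if k ≤ L ∧ L - k < n then (h k - h (k+1)) else 0) := by
        apply Finset.sum_congr rfl
        intro k _
        exact sum_range_diag n L k (fun _ => h k - h (k+1))
    _ = ∑ k ∈ Finset.Ico (L + 1 - n) (min m (L+1)), (h k - h (k+1)) := by
        rw [← Finset.sum_filter]
        apply Finset.sum_congr _ (fun _ _ => rfl)
        ext k
        simp only [Finset.mem_filter, Finset.mem_range, Finset.mem_Ico]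
        omega
    _ = 0 := by
        set s := L + 1 - n with hs
        set t := min m (L+1) with ht
        by_cases hst : s < t
        · rw [Finset.sum_Ico_eq_sum_range]
          have : ∀ k, h (s + k) - h (s + k + 1) = h (s+k) - h (s + (k+1)) := by
            intro k; rw [Nat.add_assoc]
          simp_rw [this]
          rw [Finset.sum_range_sub' (fun i => h (s + i))]
          have h1 : h s = 0 := by
            rw [hh]; dsimp only
            by_cases h0 : s = 0
            · rw [h0]; exact pR_zero_left hm θ (Or.inl rfl) _
            · have : L + 1 - s = n := by omega
              rw [this]; exact pR_zero_right θ (Or.inr le_rfl) _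
          have h2 : h (s + (t - s)) = 0 := by
            have : s + (t - s) = t := by omega
            rw [this, hh]; dsimp only
            rcases le_or_gt m (L+1) with hc | hc
            · have : t = m := by omega
              rw [this]; exact pR_zero_left hm θ (Or.inr le_rfl) _
            · have htL : t = L + 1 := by omega
              rw [htL]
              have : L + 1 - (L+1) = 0 := by omega
              rw [this]; exact pR_zero_right θ (Or.inl rfl) _
          rw [Nat.add_zero] at *
          rw [h1, h2]; ring
        · rw [Finset.Ico_eq_empty (by omega), Finset.sum_empty]


def X1 {m n : ℕ} (θ : Epar m n) (K : ℕ) : ℝ := aA θ (K-2) - (1/θ.2.2.1) * aA θ K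
def X2 {m n : ℕ} (θ : Epar m n) (K : ℕ) : ℝ := aA θ (K-1) + (θ.2.2.2/θ.2.2.1) * aA θ K
def Y1 {m n : ℕ} (θ : Epar m n) (L : ℕ) : ℝ := θ.2.2.1 * bB θ (L-1) + θ.2.2.2 * bB θ L
def Y2 {m n : ℕ} (θ : Epar m n) (L : ℕ) : ℝ := bB θ L - θ.2.2.1 * bB θ (L-2)

lemma entry_decomp {m n : ℕ} (θ : Epar m n) (hal : θ.2.2.1 ≠ 0) (k l : ℕ) :
    pR θ k (l+1) - pR θ (k+1) l
      = X1 θ (k+1) * Y1 θ (l+1) + X2 θ (k+1) * Y2 θ (l+1) := by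
  unfold pR X1 X2 Y1 Y2
  have e1 : k + 1 - 2 = k - 1 := by omega
  have e2 : k + 1 - 1 = k := by omega
  have e3 : l + 1 - 1 = l := by omega
  have e4 : l + 1 - 2 = l - 1 := by omega
  rw [e1, e2, e3, e4]
  field_simp
  ring

lemma rank_Fp {m n : ℕ} (θ : Epar m n) (hal : θ.2.2.1 ≠ 0) :
    (Matrix.of (Fp m n θ)).rank ≤ 2 := by
  have hEq : (Matrix.of (Fp m n θ)) =
      (Matrix.of (fun k (i : Fin 2) => if i = 0 then X1 θ ((k:ℕ)+1) else X2 θ ((k:ℕ)+1)) :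
        Matrix (Fin m) (Fin 2) ℝ) *
      (Matrix.of (fun (i : Fin 2) l => if i = 0 then Y1 θ ((l:ℕ)+1) else Y2 θ ((l:ℕ)+1)) :
        Matrix (Fin 2) (Fin n) ℝ) := by
    ext k l
    rw [Matrix.mul_apply, Fin.sum_univ_two]
    simp only [Matrix.of_apply]
    norm_num
    exact entry_decomp θ hal k l
  rw [hEq]
  refine le_trans (Matrix.rank_mul_le_right _ _) ?_
  exact le_trans (Matrix.rank_le_card_height _) (by simp)

lemma aA_one {m n : ℕ} (θ : Epar m n) : aA θ 1 = 1 := by unfold aA; rw [if_pos rfl]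
def ent {m n : ℕ} (Q : Fin m → Fin n → ℝ) (K L : ℕ) : ℝ :=
  if h : 1 ≤ K ∧ K ≤ m ∧ 1 ≤ L ∧ L ≤ n then Q ⟨K-1, by omega⟩ ⟨L-1, by omega⟩ else 0

def mu {m n : ℕ} (Q : Fin m → Fin n → ℝ) : ℝ :=
  ent Q 1 2 * (ent Q 1 4 + ent Q 2 3) - ent Q 1 3 * (ent Q 1 3 + ent Q 2 2)

lemma ent_in_range {m n : ℕ} (Q : Fin m → Fin n → ℝ) {K L : ℕ}
    (h1 : 1 ≤ K) (h2 : K ≤ m) (h3 : 1 ≤ L) (h4 : L ≤ n) :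
    ent Q K L = Q ⟨K-1, by omega⟩ ⟨L-1, by omega⟩ := by
  unfold ent; rw [dif_pos ⟨h1, h2, h3, h4⟩]

lemma ent_out {m n : ℕ} (Q : Fin m → Fin n → ℝ) {K L : ℕ}
    (h : ¬ (1 ≤ K ∧ K ≤ m ∧ 1 ≤ L ∧ L ≤ n)) : ent Q K L = 0 := by
  unfold ent; rw [dif_neg h]

lemma ent_Fp {m n : ℕ} (θ : Epar m n) {K L : ℕ}
    (h1 : 1 ≤ K) (h2 : K ≤ m) (h3 : 1 ≤ L) (h4 : L ≤ n) :
    ent (Fp m n θ) K L = pR θ (K-1) L - pR θ K (L-1) := by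
  rw [ent_in_range _ h1 h2 h3 h4]
  show pR θ (K-1) ((L-1)+1) - pR θ ((K-1)+1) (L-1) = _
  rw [Nat.sub_add_cancel h3, Nat.sub_add_cancel h1]

lemma pR_one {m n : ℕ} (hm : 3 ≤ m) (θ : Epar m n) (q : ℕ) :
    pR θ 1 q = bB θ q + θ.2.2.2 * bB θ (q-1) := by
  unfold pR
  rw [aA_one, aA_eq_zero hm θ (i := 1-1) (by omega)]; ring

lemma pR_two {m n : ℕ} (hm : 3 ≤ m) (θ : Epar m n) (q : ℕ) :
    pR θ 2 q = aA θ 2 * bB θ q + θ.2.2.2 * (aA θ 2 * bB θ (q-1) + bB θ q)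
      + θ.2.2.1 * bB θ (q-1) := by
  unfold pR
  have : (2:ℕ) - 1 = 1 := by omega
  rw [this, aA_one]; ring

lemma pR_q1 {m n : ℕ} (θ : Epar m n) (p : ℕ) :
    pR θ p 1 = bB θ 1 * (aA θ p + θ.2.2.2 * aA θ (p-1)) := by
  unfold pR
  rw [bB_eq_zero θ (j := 1-1) (by omega)]; ring

lemma pR_q2 {m n : ℕ} (θ : Epar m n) (p : ℕ) :
    pR θ p 2 = aA θ p * bB θ 2 + θ.2.2.2 * (aA θ p * bB θ 1 + aA θ (p-1) * bB θ 2)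
      + θ.2.2.1 * (aA θ (p-1) * bB θ 1) := by
  unfold pR
  have : (2:ℕ) - 1 = 1 := by omega
  rw [this]

-- row 1 formula, valid for all L ≥ 2
lemma ent_row1 {m n : ℕ} (hm : 3 ≤ m) (hn : 3 ≤ n) (θ : Epar m n) {L : ℕ} (hL : 2 ≤ L) :
    ent (Fp m n θ) 1 L = -(bB θ (L-1) + θ.2.2.2 * bB θ (L-2)) := by
  by_cases h : L ≤ n
  · rw [ent_Fp θ (by omega) (by omega) (by omega) h]
    rw [pR_zero_left hm θ (Or.inl rfl), pR_one hm θ]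
    have : L - 1 - 1 = L - 2 := by omega
    rw [this]; ring
  · rw [ent_out _ (by omega)]
    rw [bB_eq_zero θ (j := L-1) (by omega), bB_eq_zero θ (j := L-2) (by omega)]; ring

-- row 2 formula, valid for all L ≥ 2
lemma ent_row2 {m n : ℕ} (hm : 3 ≤ m) (hn : 3 ≤ n) (θ : Epar m n) {L : ℕ} (hL : 2 ≤ L) :
    ent (Fp m n θ) 2 L = bB θ L - aA θ 2 * bB θ (L-1) - θ.2.2.2 * aA θ 2 * bB θ (L-2)
      - θ.2.2.1 * bB θ (L-2) := by
  by_cases h : L ≤ n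
  · rw [ent_Fp θ (by omega) (by omega) (by omega) h]
    have e1 : (2:ℕ) - 1 = 1 := by omega
    rw [e1, pR_one hm θ, pR_two hm θ]
    have e2 : L - 1 - 1 = L - 2 := by omega
    rw [e2]; ring
  · rw [ent_out _ (by omega)]
    rw [bB_eq_zero θ (j := L) (by omega), bB_eq_zero θ (j := L-1) (by omega),
      bB_eq_zero θ (j := L-2) (by omega)]; ring

-- column 1 formula, valid for all K ≥ 2
lemma ent_col1 {m n : ℕ} (hm : 3 ≤ m) (hn : 3 ≤ n) (θ : Epar m n) {K : ℕ} (hK : 2 ≤ K) :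
    ent (Fp m n θ) K 1 = bB θ 1 * (aA θ (K-1) + θ.2.2.2 * aA θ (K-2)) := by
  by_cases h : K ≤ m
  · rw [ent_Fp θ (by omega) h (by omega) (by omega)]
    rw [pR_zero_right θ (Or.inl rfl), pR_q1 θ]
    have : K - 1 - 1 = K - 2 := by omega
    rw [this]; ring
  · rw [ent_out _ (by omega)]
    rw [aA_eq_zero hm θ (i := K-1) (by omega), aA_eq_zero hm θ (i := K-2) (by omega)]; ring

-- column 2 formula, valid for all K ≥ 2
lemma ent_col2 {m n : ℕ} (hm : 3 ≤ m) (hn : 3 ≤ n) (θ : Epar m n) {K : ℕ} (hK : 2 ≤ K) :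
    ent (Fp m n θ) K 2 = aA θ (K-1) * bB θ 2 + θ.2.2.2 * aA θ (K-2) * bB θ 2
      + θ.2.2.1 * aA θ (K-2) * bB θ 1 - aA θ K * bB θ 1 := by
  by_cases h : K ≤ m
  · rw [ent_Fp θ (by omega) h (by omega) (by omega)]
    have e1 : (2:ℕ) - 1 = 1 := by omega
    rw [e1, pR_q1 θ, pR_q2 θ]
    have : K - 1 - 1 = K - 2 := by omega
    rw [this]; ring
  · rw [ent_out _ (by omega)]
    rw [aA_eq_zero hm θ (i := K-1) (by omega), aA_eq_zero hm θ (i := K-2) (by omega),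
      aA_eq_zero hm θ (i := K) (by omega)]; ring

lemma mu_Fp {m n : ℕ} (hm : 3 ≤ m) (hn : 3 ≤ n) (θ : Epar m n) :
    mu (Fp m n θ) = (θ.2.2.1 - θ.2.2.2^2) * (bB θ 1)^2 := by
  unfold mu
  rw [ent_row1 hm hn θ (L := 2) (by omega), ent_row1 hm hn θ (L := 3) (by omega),
    ent_row1 hm hn θ (L := 4) (by omega),
    ent_row2 hm hn θ (L := 2) (by omega), ent_row2 hm hn θ (L := 3) (by omega)]
  norm_num
  rw [bB_eq_zero θ (j := 0) (by omega)]
  ring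

-- the N0 certificate
lemma mu_N0 {m n : ℕ} (hm : 3 ≤ m) (hn : 3 ≤ n) (Q : Fin m → Fin n → ℝ)
    (u : Fin (m-1) → ℝ) (v : Fin (n-1) → ℝ)
    (hQ : ∀ (k : Fin m) (l : Fin n),
      Q k l = pad1 u ((k : ℕ) + 1) * pad1 v (l : ℕ) - pad1 u (k : ℕ) * pad1 v ((l : ℕ) + 1)) :
    mu Q = 0 := by
  have entN0 : ∀ K L : ℕ, 1 ≤ K → K ≤ m → 1 ≤ L → L ≤ n →
      ent Q K L = pad1 u K * pad1 v (L-1) - pad1 u (K-1) * pad1 v L := by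
    intro K L h1 h2 h3 h4
    rw [ent_in_range _ h1 h2 h3 h4, hQ]
    simp only []
    rw [Nat.sub_add_cancel h1, Nat.sub_add_cancel h3]
  have h0 : pad1 u 0 = 0 := pad1_eq_zero u (Or.inl rfl)
  have e12 : ent Q 1 2 = pad1 u 1 * pad1 v 1 := by
    rw [entN0 1 2 (by omega) (by omega) (by omega) (by omega),
      show (2:ℕ)-1 = 1 from rfl, show (1:ℕ)-1 = 0 from rfl, h0]; ring
  have e13 : ent Q 1 3 = pad1 u 1 * pad1 v 2 := by
    rw [entN0 1 3 (by omega) (by omega) (by omega) (by omega),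
      show (3:ℕ)-1 = 2 from rfl, show (1:ℕ)-1 = 0 from rfl, h0]; ring
  have e14 : ent Q 1 4 = pad1 u 1 * pad1 v 3 := by
    by_cases h : 4 ≤ n
    · rw [entN0 1 4 (by omega) (by omega) (by omega) h,
        show (4:ℕ)-1 = 3 from rfl, show (1:ℕ)-1 = 0 from rfl, h0]; ring
    · rw [ent_out _ (by omega), pad1_eq_zero v (i := 3) (by omega)]; ring
  have e22 : ent Q 2 2 = pad1 u 2 * pad1 v 1 - pad1 u 1 * pad1 v 2 := by
    rw [entN0 2 2 (by omega) (by omega) (by omega) (by omega)]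
  have e23 : ent Q 2 3 = pad1 u 2 * pad1 v 2 - pad1 u 1 * pad1 v 3 := by
    rw [entN0 2 3 (by omega) (by omega) (by omega) (by omega)]
  unfold mu
  rw [e12, e13, e14, e22, e23]
  ring

def theta0 (m n : ℕ) : Epar m n :=
  (0, (fun j => if (j:ℕ) = 0 then 1 else 0), 1, 0)

def aProj (m n : ℕ) (i : ℕ) : Epar m n →L[ℝ] ℝ :=
  if h : 2 ≤ i ∧ i ≤ m - 2 then
    (ContinuousLinearMap.proj (⟨i-2, by omega⟩ : Fin (m-3))).comp
      (ContinuousLinearMap.fst ℝ _ _)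
  else 0

def bProj (m n : ℕ) (j : ℕ) : Epar m n →L[ℝ] ℝ :=
  if h : 1 ≤ j ∧ j ≤ n - 2 then
    (ContinuousLinearMap.proj (⟨j-1, by omega⟩ : Fin (n-2))).comp
      ((ContinuousLinearMap.fst ℝ _ _).comp (ContinuousLinearMap.snd ℝ _ _))
  else 0

def alProj (m n : ℕ) : Epar m n →L[ℝ] ℝ :=
  (ContinuousLinearMap.fst ℝ _ _).comp
    ((ContinuousLinearMap.snd ℝ _ _).comp (ContinuousLinearMap.snd ℝ _ _))

def beProj (m n : ℕ) : Epar m n →L[ℝ] ℝ :=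
  (ContinuousLinearMap.snd ℝ _ _).comp
    ((ContinuousLinearMap.snd ℝ _ _).comp (ContinuousLinearMap.snd ℝ _ _))

lemma aProj_apply {m n : ℕ} {i : ℕ} (h : 2 ≤ i ∧ i ≤ m - 2) (θ : Epar m n) :
    aProj m n i θ = θ.1 ⟨i-2, by omega⟩ := by
  unfold aProj; rw [dif_pos h]; rfl

lemma aProj_apply' {m n : ℕ} {i : ℕ} (h : ¬ (2 ≤ i ∧ i ≤ m - 2)) (θ : Epar m n) :
    aProj m n i θ = 0 := by
  unfold aProj; rw [dif_neg h]; rfl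

lemma bProj_apply {m n : ℕ} {j : ℕ} (h : 1 ≤ j ∧ j ≤ n - 2) (θ : Epar m n) :
    bProj m n j θ = θ.2.1 ⟨j-1, by omega⟩ := by
  unfold bProj; rw [dif_pos h]; rfl

lemma bProj_apply' {m n : ℕ} {j : ℕ} (h : ¬ (1 ≤ j ∧ j ≤ n - 2)) (θ : Epar m n) :
    bProj m n j θ = 0 := by
  unfold bProj; rw [dif_neg h]; rfl

lemma bB_eq_clm {m n : ℕ} (j : ℕ) :
    (fun θ : Epar m n => bB θ j) = ⇑(bProj m n j) := by
  funext θ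
  unfold bB pad1
  by_cases h : 1 ≤ j ∧ j ≤ n - 2
  · rw [dif_pos h, bProj_apply h]
  · rw [dif_neg h, bProj_apply' h]

lemma aA_eq_clm {m n : ℕ} {i : ℕ} (hi : i ≠ 1) :
    (fun θ : Epar m n => aA θ i) = ⇑(aProj m n i) := by
  funext θ
  unfold aA pad1
  rw [if_neg hi]
  by_cases h : 2 ≤ i ∧ i ≤ m - 2
  · rw [dif_pos (by omega), aProj_apply h]
    first
      | rfl
      | (congr 1; exact Fin.ext (by omega))
  · rw [dif_neg (by omega), aProj_apply' h]

lemma hB {m n : ℕ} (j : ℕ) (θ : Epar m n) :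
    HasStrictFDerivAt (fun θ : Epar m n => bB θ j) (bProj m n j) θ := by
  rw [bB_eq_clm]
  exact (bProj m n j).hasStrictFDerivAt

lemma hA {m n : ℕ} (i : ℕ) (θ : Epar m n) :
    HasStrictFDerivAt (fun θ : Epar m n => aA θ i) (aProj m n i) θ := by
  by_cases hi : i = 1
  · subst hi
    have h1 : (fun θ : Epar m n => aA θ 1) = fun _ => (1:ℝ) := by
      funext θ; unfold aA; rw [if_pos rfl]
    have h2 : aProj m n 1 = 0 := by unfold aProj; rw [dif_neg (by omega)]
    rw [h1, h2]
    exact hasStrictFDerivAt_const 1 θ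
  · rw [aA_eq_clm hi]
    exact (aProj m n i).hasStrictFDerivAt

lemma hAl {m n : ℕ} (θ : Epar m n) :
    HasStrictFDerivAt (fun θ : Epar m n => θ.2.2.1) (alProj m n) θ :=
  (alProj m n).hasStrictFDerivAt

lemma hBe {m n : ℕ} (θ : Epar m n) :
    HasStrictFDerivAt (fun θ : Epar m n => θ.2.2.2) (beProj m n) θ :=
  (beProj m n).hasStrictFDerivAt

lemma aA_theta0 {m n : ℕ} (i : ℕ) : aA (theta0 m n) i = if i = 1 then 1 else 0 := by
  unfold aA theta0
  by_cases hi : i = 1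
  · rw [if_pos hi, if_pos hi]
  · rw [if_neg hi, if_neg hi]
    unfold pad1
    by_cases h : 1 ≤ i - 1 ∧ i - 1 ≤ m - 3
    · rw [dif_pos h]; rfl
    · rw [dif_neg h]

lemma bB_theta0 {m n : ℕ} (hn : 3 ≤ n) (j : ℕ) :
    bB (theta0 m n) j = if j = 1 then 1 else 0 := by
  unfold bB theta0 pad1
  by_cases h : 1 ≤ j ∧ j ≤ n - 2
  · rw [dif_pos h]
    show (if (j - 1 : ℕ) = 0 then (1:ℝ) else 0) = _
    by_cases hj : j = 1
    · rw [if_pos (by omega), if_pos hj]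
    · rw [if_neg (by omega), if_neg hj]
  · rw [dif_neg h, if_neg (by omega)]



def ell (m n : ℕ) (Q : Fin m → Fin n → ℝ) : Epar m n :=
  ( fun p => if (p:ℕ) = 0 then ent Q 4 2 + ent Q 5 1 else ent Q ((p:ℕ)+3) 1,
    fun q => if (q:ℕ) = 1 then (-(ent Q 1 5) - ent Q 2 4) else -(ent Q 1 ((q:ℕ)+2)),
    ent Q 3 2 + ent Q 1 2 + ent Q 4 1,
    ent Q 3 1 - ent Q 4 2 - ent Q 5 1 )

lemma convert_deriv {m n : ℕ} {θ : Epar m n} {f : Epar m n → ℝ} {D D' : Epar m n →L[ℝ] ℝ}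
    (h : HasStrictFDerivAt f D θ) (hDD : ∀ θ', D θ' = D' θ') : HasStrictFDerivAt f D' θ := by
  have : D = D' := ContinuousLinearMap.ext hDD
  rwa [this] at h


lemma aA_theta0_ne {m n : ℕ} {i : ℕ} (h : i ≠ 1) : aA (theta0 m n) i = 0 := by
  rw [aA_theta0, if_neg h]

lemma bB_theta0_one {m n : ℕ} (hn : 3 ≤ n) : bB (theta0 m n) 1 = 1 := by
  rw [bB_theta0 hn, if_pos rfl]

lemma bB_theta0_ne {m n : ℕ} (hn : 3 ≤ n) {j : ℕ} (h : j ≠ 1) : bB (theta0 m n) j = 0 := by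
  rw [bB_theta0 hn, if_neg h]

lemma comp_a0 {m n : ℕ} (hm : 3 ≤ m) (hn : 3 ≤ n) (p : Fin (m-3)) (hp : (p:ℕ) = 0) :
    HasStrictFDerivAt (fun θ : Epar m n => (ell m n (Fp m n θ)).1 p)
      ((ContinuousLinearMap.proj p).comp (ContinuousLinearMap.fst ℝ _ _)) (theta0 m n) := by
  have hfun : (fun θ : Epar m n => (ell m n (Fp m n θ)).1 p)
      = fun θ : Epar m n => aA θ 3 * bB θ 2 + θ.2.2.2 * aA θ 2 * bB θ 2
          + θ.2.2.1 * aA θ 2 * bB θ 1 + θ.2.2.2 * aA θ 3 * bB θ 1 := by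
    funext θ
    show (if (p:ℕ) = 0 then ent (Fp m n θ) 4 2 + ent (Fp m n θ) 5 1
        else ent (Fp m n θ) ((p:ℕ)+3) 1) = _
    rw [if_pos hp]
    rw [ent_col2 hm hn θ (K:=4) (by omega), ent_col1 hm hn θ (K:=5) (by omega)]
    show aA θ 3 * bB θ 2 + θ.2.2.2 * aA θ 2 * bB θ 2 + θ.2.2.1 * aA θ 2 * bB θ 1
        - aA θ 4 * bB θ 1 + bB θ 1 * (aA θ 4 + θ.2.2.2 * aA θ 3) = _
    ring
  rw [hfun]
  refine convert_deriv ((((hA 3 _).mul (hB 2 _)).add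
    (((hBe _).mul (hA 2 _)).mul (hB 2 _))).add
    (((hAl _).mul (hA 2 _)).mul (hB 1 _)) |>.add
    (((hBe _).mul (hA 3 _)).mul (hB 1 _))) ?_
  intro θ'
  simp only [ContinuousLinearMap.add_apply, ContinuousLinearMap.smul_apply,
    ContinuousLinearMap.comp_apply, ContinuousLinearMap.proj_apply,
    ContinuousLinearMap.coe_fst', ContinuousLinearMap.coe_snd',
    aA_theta0, bB_theta0 hn, smul_eq_mul]
  norm_num
  rw [aProj_apply (i := 2) (by omega)]
  rw [show (theta0 m n).2.2.1 = 1 from rfl, show (theta0 m n).2.2.2 = 0 from rfl]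
  norm_num
  simp only [aA_theta0, show (2:ℕ) ≠ 1 by omega, if_false, zero_mul, zero_add]
  exact congrArg θ'.1 (Fin.ext (by simp [hp]))

lemma comp_aP {m n : ℕ} (hm : 3 ≤ m) (hn : 3 ≤ n) (p : Fin (m-3)) (hp : ¬ ((p:ℕ) = 0)) :
    HasStrictFDerivAt (fun θ : Epar m n => (ell m n (Fp m n θ)).1 p)
      ((ContinuousLinearMap.proj p).comp (ContinuousLinearMap.fst ℝ _ _)) (theta0 m n) := by
  have hfun : (fun θ : Epar m n => (ell m n (Fp m n θ)).1 p)
      = fun θ : Epar m n => bB θ 1 * (aA θ ((p:ℕ)+2) + θ.2.2.2 * aA θ ((p:ℕ)+1)) := by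
    funext θ
    show (if (p:ℕ) = 0 then ent (Fp m n θ) 4 2 + ent (Fp m n θ) 5 1
        else ent (Fp m n θ) ((p:ℕ)+3) 1) = _
    rw [if_neg hp]
    rw [ent_col1 hm hn θ (K:=(p:ℕ)+3) (by omega)]
    rfl
  rw [hfun]
  refine convert_deriv ((hB 1 _).mul
    ((hA ((p:ℕ)+2) _).add ((hBe _).mul (hA ((p:ℕ)+1) _)))) ?_
  intro θ'
  simp only [ContinuousLinearMap.add_apply, ContinuousLinearMap.smul_apply,
    ContinuousLinearMap.comp_apply, ContinuousLinearMap.proj_apply,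
    ContinuousLinearMap.coe_fst', ContinuousLinearMap.coe_snd', smul_eq_mul]
  rw [aA_theta0_ne (i := (p:ℕ)+2) (by omega), aA_theta0_ne (i := (p:ℕ)+1) (by omega),
    bB_theta0_one hn, show (theta0 m n).2.2.2 = 0 from rfl,
    aProj_apply (i := (p:ℕ)+2) (by omega)]
  norm_num

lemma comp_b1 {m n : ℕ} (hm : 3 ≤ m) (hn : 3 ≤ n) (q : Fin (n-2)) (hq : (q:ℕ) = 1) :
    HasStrictFDerivAt (fun θ : Epar m n => (ell m n (Fp m n θ)).2.1 q)
      ((ContinuousLinearMap.proj q).comp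
        ((ContinuousLinearMap.fst ℝ _ _).comp (ContinuousLinearMap.snd ℝ _ _)))
      (theta0 m n) := by
  have hfun : (fun θ : Epar m n => (ell m n (Fp m n θ)).2.1 q)
      = fun θ : Epar m n => θ.2.2.2 * bB θ 3 + aA θ 2 * bB θ 3
          + θ.2.2.2 * aA θ 2 * bB θ 2 + θ.2.2.1 * bB θ 2 := by
    funext θ
    show (if (q:ℕ) = 1 then (-(ent (Fp m n θ) 1 5) - ent (Fp m n θ) 2 4)
        else -(ent (Fp m n θ) 1 ((q:ℕ)+2))) = _
    rw [if_pos hq]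
    rw [ent_row1 hm hn θ (L:=5) (by omega), ent_row2 hm hn θ (L:=4) (by omega)]
    show -(-(bB θ 4 + θ.2.2.2 * bB θ 3))
        - (bB θ 4 - aA θ 2 * bB θ 3 - θ.2.2.2 * aA θ 2 * bB θ 2 - θ.2.2.1 * bB θ 2) = _
    ring
  rw [hfun]
  refine convert_deriv ((((hBe _).mul (hB 3 _)).add ((hA 2 _).mul (hB 3 _))).add
    (((hBe _).mul (hA 2 _)).mul (hB 2 _)) |>.add ((hAl _).mul (hB 2 _))) ?_
  intro θ'
  simp only [ContinuousLinearMap.add_apply, ContinuousLinearMap.smul_apply,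
    ContinuousLinearMap.comp_apply, ContinuousLinearMap.proj_apply,
    ContinuousLinearMap.coe_fst', ContinuousLinearMap.coe_snd', smul_eq_mul]
  rw [aA_theta0_ne (i := 2) (by omega), bB_theta0_ne hn (j := 3) (by omega),
    bB_theta0_ne hn (j := 2) (by omega),
    show (theta0 m n).2.2.1 = 1 from rfl, show (theta0 m n).2.2.2 = 0 from rfl,
    bProj_apply (j := 2) (by omega)]
  norm_num
  simp only [aA_theta0, show (2:ℕ) ≠ 1 by omega, if_false, mul_zero, zero_mul, zero_add]
  exact congrArg θ'.2.1 (Fin.ext (by simp [hq]))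

lemma comp_bQ {m n : ℕ} (hm : 3 ≤ m) (hn : 3 ≤ n) (q : Fin (n-2)) (hq : ¬ ((q:ℕ) = 1)) :
    HasStrictFDerivAt (fun θ : Epar m n => (ell m n (Fp m n θ)).2.1 q)
      ((ContinuousLinearMap.proj q).comp
        ((ContinuousLinearMap.fst ℝ _ _).comp (ContinuousLinearMap.snd ℝ _ _)))
      (theta0 m n) := by
  have hfun : (fun θ : Epar m n => (ell m n (Fp m n θ)).2.1 q)
      = fun θ : Epar m n => bB θ ((q:ℕ)+1) + θ.2.2.2 * bB θ (q:ℕ) := by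
    funext θ
    show (if (q:ℕ) = 1 then (-(ent (Fp m n θ) 1 5) - ent (Fp m n θ) 2 4)
        else -(ent (Fp m n θ) 1 ((q:ℕ)+2))) = _
    rw [if_neg hq]
    rw [ent_row1 hm hn θ (L:=(q:ℕ)+2) (by omega)]
    show -(-(bB θ ((q:ℕ)+1) + θ.2.2.2 * bB θ (q:ℕ))) = _
    ring
  rw [hfun]
  refine convert_deriv ((hB ((q:ℕ)+1) _).add ((hBe _).mul (hB (q:ℕ) _))) ?_
  intro θ'
  simp only [ContinuousLinearMap.add_apply, ContinuousLinearMap.smul_apply,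
    ContinuousLinearMap.comp_apply, ContinuousLinearMap.proj_apply,
    ContinuousLinearMap.coe_fst', ContinuousLinearMap.coe_snd', smul_eq_mul]
  rw [bB_theta0_ne hn (j := (q:ℕ)) (by omega),
    show (theta0 m n).2.2.2 = 0 from rfl,
    bProj_apply (j := (q:ℕ)+1) (by omega)]
  norm_num

lemma comp_al {m n : ℕ} (hm : 3 ≤ m) (hn : 3 ≤ n) :
    HasStrictFDerivAt (fun θ : Epar m n => (ell m n (Fp m n θ)).2.2.1)
      (alProj m n) (theta0 m n) := by
  have hfun : (fun θ : Epar m n => (ell m n (Fp m n θ)).2.2.1)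
      = fun θ : Epar m n => aA θ 2 * bB θ 2 + θ.2.2.2 * bB θ 2 + θ.2.2.1 * bB θ 1
          - bB θ 1 + θ.2.2.2 * aA θ 2 * bB θ 1 := by
    funext θ
    show ent (Fp m n θ) 3 2 + ent (Fp m n θ) 1 2 + ent (Fp m n θ) 4 1 = _
    rw [ent_col2 hm hn θ (K:=3) (by omega), ent_row1 hm hn θ (L:=2) (by omega),
      ent_col1 hm hn θ (K:=4) (by omega)]
    show aA θ 2 * bB θ 2 + θ.2.2.2 * aA θ 1 * bB θ 2 + θ.2.2.1 * aA θ 1 * bB θ 1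
        - aA θ 3 * bB θ 1 + (-(bB θ 1 + θ.2.2.2 * bB θ 0))
        + bB θ 1 * (aA θ 3 + θ.2.2.2 * aA θ 2) = _
    rw [aA_one, bB_eq_zero θ (j := 0) (by omega)]
    ring
  rw [hfun]
  refine convert_deriv (((((hA 2 _).mul (hB 2 _)).add ((hBe _).mul (hB 2 _))).add
    ((hAl _).mul (hB 1 _)) |>.sub (hB 1 _)).add
    (((hBe _).mul (hA 2 _)).mul (hB 1 _))) ?_
  intro θ'
  simp only [ContinuousLinearMap.add_apply, ContinuousLinearMap.sub_apply,
    ContinuousLinearMap.smul_apply,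
    ContinuousLinearMap.comp_apply, ContinuousLinearMap.proj_apply,
    ContinuousLinearMap.coe_fst', ContinuousLinearMap.coe_snd', smul_eq_mul]
  rw [aA_theta0_ne (i := 2) (by omega), bB_theta0_ne hn (j := 2) (by omega),
    bB_theta0_one hn,
    show (theta0 m n).2.2.1 = 1 from rfl, show (theta0 m n).2.2.2 = 0 from rfl]
  show _ = (alProj m n) θ'
  norm_num
  exact Or.inl (Or.inl rfl)

lemma comp_be {m n : ℕ} (hm : 3 ≤ m) (hn : 3 ≤ n) :
    HasStrictFDerivAt (fun θ : Epar m n => (ell m n (Fp m n θ)).2.2.2)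
      (beProj m n) (theta0 m n) := by
  have hfun : (fun θ : Epar m n => (ell m n (Fp m n θ)).2.2.2)
      = fun θ : Epar m n => bB θ 1 * aA θ 2 + θ.2.2.2 * bB θ 1 - aA θ 3 * bB θ 2
          - θ.2.2.2 * aA θ 2 * bB θ 2 - θ.2.2.1 * aA θ 2 * bB θ 1
          - θ.2.2.2 * aA θ 3 * bB θ 1 := by
    funext θ
    show ent (Fp m n θ) 3 1 - ent (Fp m n θ) 4 2 - ent (Fp m n θ) 5 1 = _
    rw [ent_col1 hm hn θ (K:=3) (by omega), ent_col2 hm hn θ (K:=4) (by omega),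
      ent_col1 hm hn θ (K:=5) (by omega)]
    show bB θ 1 * (aA θ 2 + θ.2.2.2 * aA θ 1)
        - (aA θ 3 * bB θ 2 + θ.2.2.2 * aA θ 2 * bB θ 2 + θ.2.2.1 * aA θ 2 * bB θ 1
            - aA θ 4 * bB θ 1)
        - bB θ 1 * (aA θ 4 + θ.2.2.2 * aA θ 3) = _
    rw [aA_one]
    ring
  rw [hfun]
  refine convert_deriv ((((hB 1 _).mul (hA 2 _)).add ((hBe _).mul (hB 1 _)) |>.sub
    ((hA 3 _).mul (hB 2 _)) |>.sub
    (((hBe _).mul (hA 2 _)).mul (hB 2 _)) |>.sub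
    (((hAl _).mul (hA 2 _)).mul (hB 1 _)) |>.sub
    (((hBe _).mul (hA 3 _)).mul (hB 1 _)))) ?_
  intro θ'
  simp only [ContinuousLinearMap.add_apply, ContinuousLinearMap.sub_apply,
    ContinuousLinearMap.smul_apply,
    ContinuousLinearMap.comp_apply, ContinuousLinearMap.proj_apply,
    ContinuousLinearMap.coe_fst', ContinuousLinearMap.coe_snd', smul_eq_mul]
  rw [aA_theta0_ne (i := 2) (by omega), aA_theta0_ne (i := 3) (by omega),
    bB_theta0_ne hn (j := 2) (by omega), bB_theta0_one hn,
    show (theta0 m n).2.2.1 = 1 from rfl, show (theta0 m n).2.2.2 = 0 from rfl]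
  show _ = (beProj m n) θ'
  norm_num
  simp only [aA_theta0, show (2:ℕ) ≠ 1 by omega, show (3:ℕ) ≠ 1 by omega, if_false, mul_zero, zero_mul]
  ring

lemma hasStrict_g {m n : ℕ} (hm : 3 ≤ m) (hn : 3 ≤ n) :
    HasStrictFDerivAt (fun θ : Epar m n => ell m n (Fp m n θ))
      (ContinuousLinearMap.id ℝ (Epar m n)) (theta0 m n) := by
  have hDa : HasStrictFDerivAt (fun θ : Epar m n => (ell m n (Fp m n θ)).1)
      (ContinuousLinearMap.fst ℝ _ _) (theta0 m n) := by
    apply hasStrictFDerivAt_pi''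
    intro p
    by_cases hp : (p:ℕ) = 0
    · exact comp_a0 hm hn p hp
    · exact comp_aP hm hn p hp
  have hDb : HasStrictFDerivAt (fun θ : Epar m n => (ell m n (Fp m n θ)).2.1)
      ((ContinuousLinearMap.fst ℝ _ _).comp (ContinuousLinearMap.snd ℝ _ _)) (theta0 m n) := by
    apply hasStrictFDerivAt_pi''
    intro q
    by_cases hq : (q:ℕ) = 1
    · exact comp_b1 hm hn q hq
    · exact comp_bQ hm hn q hq
  have H := hDa.prodMk (hDb.prodMk ((comp_al hm hn).prodMk (comp_be hm hn)))
  have hD : ((ContinuousLinearMap.fst ℝ (Fin (m-3) → ℝ) ((Fin (n-2) → ℝ) × ℝ × ℝ)).prod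
      ((((ContinuousLinearMap.fst ℝ _ _).comp (ContinuousLinearMap.snd ℝ _ _))).prod
        ((alProj m n).prod (beProj m n))))
      = ContinuousLinearMap.id ℝ (Epar m n) := by
    apply ContinuousLinearMap.ext
    intro θ'
    rfl
  rw [hD] at H
  exact H


lemma dist_fst_le' {α β : Type*} [PseudoMetricSpace α] [PseudoMetricSpace β]
    (x y : α × β) : dist x.1 y.1 ≤ dist x y := by
  rw [Prod.dist_eq]; exact le_max_left _ _

lemma dist_snd_le' {α β : Type*} [PseudoMetricSpace α] [PseudoMetricSpace β]
    (x y : α × β) : dist x.2 y.2 ≤ dist x y := by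
  rw [Prod.dist_eq]; exact le_max_right _ _

lemma abs3_le {a1 a2 a3 D : ℝ} (h1 : |a1| ≤ D) (h2 : |a2| ≤ D) (h3 : |a3| ≤ D) :
    |a1 + a2 + a3| ≤ 3*D := by
  calc |a1 + a2 + a3| ≤ |a1 + a2| + |a3| := abs_add_le _ _
    _ ≤ |a1| + |a2| + |a3| := by linarith [abs_add_le a1 a2]
    _ ≤ 3*D := by linarith

lemma ell_lipschitz (m n : ℕ) : LipschitzWith 3 (ell m n) := by
  apply LipschitzWith.of_dist_le_mul
  intro Q Q'
  have hD : (0:ℝ) ≤ dist Q Q' := dist_nonneg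
  have hent : ∀ K L : ℕ, |ent Q K L - ent Q' K L| ≤ dist Q Q' := by
    intro K L
    by_cases h : 1 ≤ K ∧ K ≤ m ∧ 1 ≤ L ∧ L ≤ n
    · obtain ⟨h1, h2, h3, h4⟩ := h
      rw [ent_in_range Q h1 h2 h3 h4, ent_in_range Q' h1 h2 h3 h4, ← Real.dist_eq]
      exact (dist_le_pi_dist _ _ _).trans (dist_le_pi_dist Q Q' _)
    · rw [ent_out Q h, ent_out Q' h]; simpa using hD
  have hcoe : ((3 : ℝ≥0) : ℝ) = 3 := by norm_num
  rw [hcoe, Prod.dist_eq, Prod.dist_eq, Prod.dist_eq]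
  refine max_le ?_ (max_le ?_ (max_le ?_ ?_))
  · refine (dist_pi_le_iff (by positivity)).2 ?_
    intro p
    rw [Real.dist_eq]
    show |(if (p:ℕ) = 0 then ent Q 4 2 + ent Q 5 1 else ent Q ((p:ℕ)+3) 1)
        - (if (p:ℕ) = 0 then ent Q' 4 2 + ent Q' 5 1 else ent Q' ((p:ℕ)+3) 1)| ≤ _
    by_cases hp : (p:ℕ) = 0
    · rw [if_pos hp, if_pos hp,
        show (ent Q 4 2 + ent Q 5 1) - (ent Q' 4 2 + ent Q' 5 1)
          = (ent Q 4 2 - ent Q' 4 2) + (ent Q 5 1 - ent Q' 5 1) + 0 from by ring]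
      exact abs3_le (hent 4 2) (hent 5 1) (by simpa using hD)
    · rw [if_neg hp, if_neg hp]
      exact (hent _ _).trans (by linarith)
  · refine (dist_pi_le_iff (by positivity)).2 ?_
    intro q
    rw [Real.dist_eq]
    show |(if (q:ℕ) = 1 then (-(ent Q 1 5) - ent Q 2 4) else -(ent Q 1 ((q:ℕ)+2)))
        - (if (q:ℕ) = 1 then (-(ent Q' 1 5) - ent Q' 2 4) else -(ent Q' 1 ((q:ℕ)+2)))| ≤ _
    by_cases hq : (q:ℕ) = 1
    · rw [if_pos hq, if_pos hq,
        show (-(ent Q 1 5) - ent Q 2 4) - (-(ent Q' 1 5) - ent Q' 2 4)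
          = (-(ent Q 1 5 - ent Q' 1 5)) + (-(ent Q 2 4 - ent Q' 2 4)) + 0 from by ring]
      refine abs3_le ?_ ?_ (by simpa using hD)
      · rw [abs_neg]; exact hent 1 5
      · rw [abs_neg]; exact hent 2 4
    · rw [if_neg hq, if_neg hq,
        show -(ent Q 1 ((q:ℕ)+2)) - -(ent Q' 1 ((q:ℕ)+2))
          = -(ent Q 1 ((q:ℕ)+2) - ent Q' 1 ((q:ℕ)+2)) from by ring, abs_neg]
      exact (hent _ _).trans (by linarith)
  · rw [Real.dist_eq]
    show |(ent Q 3 2 + ent Q 1 2 + ent Q 4 1) - (ent Q' 3 2 + ent Q' 1 2 + ent Q' 4 1)| ≤ _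
    rw [show (ent Q 3 2 + ent Q 1 2 + ent Q 4 1) - (ent Q' 3 2 + ent Q' 1 2 + ent Q' 4 1)
      = (ent Q 3 2 - ent Q' 3 2) + (ent Q 1 2 - ent Q' 1 2) + (ent Q 4 1 - ent Q' 4 1)
        from by ring]
    exact abs3_le (hent 3 2) (hent 1 2) (hent 4 1)
  · rw [Real.dist_eq]
    show |(ent Q 3 1 - ent Q 4 2 - ent Q 5 1) - (ent Q' 3 1 - ent Q' 4 2 - ent Q' 5 1)| ≤ _
    rw [show (ent Q 3 1 - ent Q 4 2 - ent Q 5 1) - (ent Q' 3 1 - ent Q' 4 2 - ent Q' 5 1)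
      = (ent Q 3 1 - ent Q' 3 1) + (-(ent Q 4 2 - ent Q' 4 2)) + (-(ent Q 5 1 - ent Q' 5 1))
        from by ring]
    refine abs3_le (hent 3 1) ?_ ?_
    · rw [abs_neg]; exact hent 4 2
    · rw [abs_neg]; exact hent 5 1

lemma contDiff_Fp (m n : ℕ) : ContDiff ℝ 1 (Fp m n) := by
  have hA' : ∀ i, ContDiff ℝ 1 (fun θ : Epar m n => aA θ i) := by
    intro i
    by_cases hi : i = 1
    · subst hi
      have : (fun θ : Epar m n => aA θ 1) = fun _ => (1:ℝ) := by
        funext θ; exact aA_one θ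
      rw [this]; exact contDiff_const
    · rw [aA_eq_clm hi]; exact (aProj m n i).contDiff
  have hB' : ∀ j, ContDiff ℝ 1 (fun θ : Epar m n => bB θ j) := by
    intro j; rw [bB_eq_clm]; exact (bProj m n j).contDiff
  have hal : ContDiff ℝ 1 (fun θ : Epar m n => θ.2.2.1) := (alProj m n).contDiff
  have hbe : ContDiff ℝ 1 (fun θ : Epar m n => θ.2.2.2) := (beProj m n).contDiff
  have hpR : ∀ p q, ContDiff ℝ 1 (fun θ : Epar m n => pR θ p q) := by
    intro p q
    exact (((hA' p).mul (hB' q)).add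
      (hbe.mul (((hA' p).mul (hB' (q-1))).add ((hA' (p-1)).mul (hB' q))))).add
      (hal.mul ((hA' (p-1)).mul (hB' (q-1))))
  apply contDiff_pi.2
  intro k
  apply contDiff_pi.2
  intro l
  exact (hpR (k:ℕ) ((l:ℕ)+1)).sub (hpR ((k:ℕ)+1) (l:ℕ))

lemma ball_al {m n : ℕ} {θ : Epar m n} (hθ : θ ∈ Metric.ball (theta0 m n) (1/4)) :
    |θ.2.2.1 - 1| < 1/4 ∧ |θ.2.2.2| < 1/4 := by
  rw [Metric.mem_ball] at hθ
  constructor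
  · calc |θ.2.2.1 - 1| = dist θ.2.2.1 (theta0 m n).2.2.1 := by rw [Real.dist_eq]; rfl
      _ ≤ dist θ.2.2 (theta0 m n).2.2 := dist_fst_le' _ _
      _ ≤ dist θ.2 (theta0 m n).2 := dist_snd_le' _ _
      _ ≤ dist θ (theta0 m n) := dist_snd_le' _ _
      _ < 1/4 := hθ
  · have e0 : |θ.2.2.2| = dist θ.2.2.2 (theta0 m n).2.2.2 := by
      rw [Real.dist_eq, show (theta0 m n).2.2.2 = 0 from rfl, sub_zero]
    rw [e0]
    calc dist θ.2.2.2 (theta0 m n).2.2.2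
        ≤ dist θ.2.2 (theta0 m n).2.2 := dist_snd_le' _ _
      _ ≤ dist θ.2 (theta0 m n).2 := dist_snd_le' _ _
      _ ≤ dist θ (theta0 m n) := dist_snd_le' _ _
      _ < 1/4 := hθ

lemma ball_bB1 {m n : ℕ} (hn : 3 ≤ n) {θ : Epar m n}
    (hθ : θ ∈ Metric.ball (theta0 m n) (1/4)) : |bB θ 1 - 1| < 1/4 := by
  rw [Metric.mem_ball] at hθ
  have h1 : bB θ 1 = θ.2.1 ⟨0, by omega⟩ := by
    unfold bB pad1; rw [dif_pos (by omega)]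
  have h2 : (theta0 m n).2.1 ⟨0, by omega⟩ = (1:ℝ) := by
    show (if ((⟨0, by omega⟩ : Fin (n-2)) : ℕ) = 0 then (1:ℝ) else 0) = 1
    rw [if_pos rfl]
  calc |bB θ 1 - 1| = dist (θ.2.1 ⟨0, by omega⟩) ((theta0 m n).2.1 ⟨0, by omega⟩) := by
        rw [Real.dist_eq, h1, h2]
    _ ≤ dist θ.2.1 (theta0 m n).2.1 := dist_le_pi_dist _ _ _
    _ ≤ dist θ.2 (theta0 m n).2 := dist_fst_le' _ _
    _ ≤ dist θ (theta0 m n) := dist_snd_le' _ _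
    _ < 1/4 := hθ

lemma dimH_M (m n : ℕ) (hm : 3 ≤ m) (hn : 3 ≤ n) :
    dimH ((Fp m n) '' (Metric.ball (theta0 m n) (1/4))) = ((m + n - 3 : ℕ) : ℝ≥0∞) := by
  have hfr : Module.finrank ℝ (Epar m n) = m + n - 3 := by
    have h1 : Module.finrank ℝ (Epar m n)
        = (m-3) + ((n-2) + (1 + 1)) := by
      rw [Module.finrank_prod, Module.finrank_prod, Module.finrank_prod,
        Module.finrank_fin_fun, Module.finrank_fin_fun, Module.finrank_self]
    rw [h1]; omega
  have hball : Metric.ball (theta0 m n) (1/4 : ℝ) ∈ nhds (theta0 m n) :=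
    Metric.ball_mem_nhds _ (by norm_num)
  refine le_antisymm ?_ ?_
  · have h2 := ContDiffOn.dimH_image_le ((contDiff_Fp m n).contDiffOn (s := Set.univ))
      convex_univ (Set.subset_univ (Metric.ball (theta0 m n) (1/4)))
    rw [Real.dimH_of_mem_nhds hball, hfr] at h2
    exact h2
  · have hg' : HasStrictFDerivAt (fun θ : Epar m n => ell m n (Fp m n θ))
        ((ContinuousLinearEquiv.refl ℝ (Epar m n) : Epar m n ≃L[ℝ] Epar m n) :
          Epar m n →L[ℝ] Epar m n) (theta0 m n) := by
      have := hasStrict_g hm hn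
      rwa [ContinuousLinearEquiv.coe_refl]
    have hmap := hg'.map_nhds_eq_of_equiv
    have himg : (fun θ : Epar m n => ell m n (Fp m n θ)) '' (Metric.ball (theta0 m n) (1/4)) ∈
        nhds (ell m n (Fp m n (theta0 m n))) := by
      rw [← hmap]; exact Filter.image_mem_map hball
    have h1 : dimH ((fun θ : Epar m n => ell m n (Fp m n θ)) '' (Metric.ball (theta0 m n) (1/4)))
        = ((m + n - 3 : ℕ) : ℝ≥0∞) := by
      rw [Real.dimH_of_mem_nhds himg, hfr]
    have h2 : (fun θ : Epar m n => ell m n (Fp m n θ)) '' (Metric.ball (theta0 m n) (1/4))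
        = (ell m n) '' ((Fp m n) '' (Metric.ball (theta0 m n) (1/4))) := by
      rw [Set.image_image]
    have h3 := (ell_lipschitz m n).dimH_image_le ((Fp m n) '' (Metric.ball (theta0 m n) (1/4)))
    rw [← h2, h1] at h3
    exact h3

end Stmt1

/-- for `m, n ≥ 3` there is a set `M ⊆ N(S_{(m,n)}, 2)` of Hausdorff
dimension `m + n − 3` none of whose elements is representable in `N0(m,n)`-form. -/
theorem stmt1 (m n : ℕ) (hm : 3 ≤ m) (hn : 3 ≤ n) :
    ∃ M : Set (Matrix (Fin m) (Fin n) ℝ),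
      M ⊆ rankTwoNull m n ∧ dimH M = ((m + n - 3 : ℕ) : ENNReal) ∧
      ∀ Q ∈ M, Q ∉ N0set m n := by
  classical
  refine ⟨(fun θ => Matrix.of (Stmt1.Fp m n θ)) '' (Metric.ball (Stmt1.theta0 m n) (1/4)),
    ?_, ?_, ?_⟩
  · rintro Q ⟨θ, hθ, rfl⟩
    have hal := (Stmt1.ball_al hθ).1
    have hne : θ.2.2.1 ≠ 0 := by
      intro h; rw [h] at hal; norm_num at hal
    exact ⟨Stmt1.rank_Fp θ hne, Stmt1.liftS_Fp m n hm hn θ⟩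
  · exact Stmt1.dimH_M m n hm hn
  · rintro Q ⟨θ, hθ, rfl⟩ ⟨u, v, hQ⟩
    have h0 : Stmt1.mu (Stmt1.Fp m n θ) = 0 := Stmt1.mu_N0 hm hn _ u v hQ
    rw [Stmt1.mu_Fp hm hn θ] at h0
    obtain ⟨h1, h2⟩ := Stmt1.ball_al hθ
    have h3 := Stmt1.ball_bB1 hn hθ
    obtain ⟨h1a, h1b⟩ := abs_lt.mp h1
    obtain ⟨h2a, h2b⟩ := abs_lt.mp h2
    obtain ⟨h3a, h3b⟩ := abs_lt.mp h3
    have hA : θ.2.2.1 - θ.2.2.2^2 > 0 := by nlinarith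
    have hBp : Stmt1.bB θ 1 > 1/2 := by linarith
    have : (θ.2.2.1 - θ.2.2.2^2) * (Stmt1.bB θ 1)^2 > 0 := by positivity
    exact absurd h0 (ne_of_gt this)
end
end

section
/- For all integers m, n ≥ 3, outside the exceptional set M(m,n) the rank-two null space is exactly the union of the two parametrized families: N(S_{(m,n)}, 2) \ M(m,n) = (N0(m,n) ∪ N2(m,n)) \ M(m,n). -/
open scoped BigOperators
open MeasureTheory

noncomputable section

namespace Stmt5Aux

open Polynomial

/-- The polynomial with coefficients given by a finite vector. -/
def polyOf {d : ℕ} (v : Fin d → ℝ) : ℝ[X] := ∑ i : Fin d, C (v i) * X ^ (i : ℕ)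

lemma polyOf_coeff {d : ℕ} (v : Fin d → ℝ) (k : ℕ) :
    (polyOf v).coeff k = if h : k < d then v ⟨k, h⟩ else 0 := by
  classical
  unfold polyOf
  rw [Polynomial.finset_sum_coeff]
  simp only [Polynomial.coeff_C_mul, Polynomial.coeff_X_pow]
  by_cases h : k < d
  · rw [dif_pos h, Finset.sum_eq_single (⟨k, h⟩ : Fin d)]
    · simp
    · intro b _ hb
      have : k ≠ (b : ℕ) := fun e => hb (by apply Fin.ext; simp [← e])
      simp [this]
    · simp
  · rw [dif_neg h]
    apply Finset.sum_eq_zero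
    intro i _
    have : k ≠ (i : ℕ) := by omega
    simp [this]

lemma polyOf_coeff_lt {d : ℕ} (v : Fin d → ℝ) (k : Fin d) :
    (polyOf v).coeff (k : ℕ) = v k := by
  rw [polyOf_coeff, dif_pos k.2]

lemma polyOf_coeff_of_ge {d : ℕ} (v : Fin d → ℝ) {k : ℕ} (h : d ≤ k) :
    (polyOf v).coeff k = 0 := by
  rw [polyOf_coeff]; rw [dif_neg (by omega)]

lemma polyOf_natDegree_lt {d : ℕ} (v : Fin d → ℝ) (hd : 0 < d) :
    (polyOf v).natDegree < d := by
  by_cases hp : polyOf v = 0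
  · simp [hp, hd]
  · by_contra h
    push_neg at h
    exact (Polynomial.leadingCoeff_ne_zero.mpr hp) (polyOf_coeff_of_ge v h)

lemma coeff_polyOf_mul {m n : ℕ} (a : Fin m → ℝ) (b : Fin n → ℝ) (l : ℕ) :
    (polyOf a * polyOf b).coeff l
      = ∑ k : Fin m, ∑ j : Fin n, if (k : ℕ) + (j : ℕ) = l then a k * b j else 0 := by
  classical
  unfold polyOf
  rw [Finset.sum_mul_sum]
  rw [Polynomial.finset_sum_coeff]
  refine Finset.sum_congr rfl fun k _ => ?_
  rw [Polynomial.finset_sum_coeff]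
  refine Finset.sum_congr rfl fun j _ => ?_
  have : (C (a k) * X ^ (k:ℕ)) * (C (b j) * X ^ (j:ℕ))
      = C (a k * b j) * X ^ ((k:ℕ) + (j:ℕ)) := by
    rw [Polynomial.C_mul]; ring
  rw [this, Polynomial.coeff_C_mul, Polynomial.coeff_X_pow]
  by_cases h : (k:ℕ) + (j:ℕ) = l
  · simp [h]
  · simp [h, Ne.symm h]

lemma liftS_decomp {m n : ℕ} (a c : Fin m → ℝ) (b d : Fin n → ℝ) (l : ℕ) :
    (∑ k : Fin m, ∑ j : Fin n, if (k : ℕ) + (j : ℕ) = l then a k * b j + c k * d j else 0)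
      = (polyOf a * polyOf b + polyOf c * polyOf d).coeff l := by
  rw [Polynomial.coeff_add, coeff_polyOf_mul, coeff_polyOf_mul, ← Finset.sum_add_distrib]
  refine Finset.sum_congr rfl fun k _ => ?_
  rw [← Finset.sum_add_distrib]
  refine Finset.sum_congr rfl fun j _ => ?_
  by_cases h : (k:ℕ) + (j:ℕ) = l <;> simp [h]

lemma liftS_decomp_eq_zero_iff {m n : ℕ} (hm : 0 < m) (hn : 0 < n)
    (a c : Fin m → ℝ) (b d : Fin n → ℝ) :
    liftS m n (Matrix.of fun k l => a k * b l + c k * d l) = 0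
      ↔ polyOf a * polyOf b + polyOf c * polyOf d = 0 := by
  constructor
  · intro h
    ext l
    rcases lt_or_ge l (m + n - 1) with hl | hl
    · have := congrFun h ⟨l, hl⟩
      simpa [liftS, liftS_decomp a c b d l] using this
    · rw [Polynomial.coeff_zero]
      apply Polynomial.coeff_eq_zero_of_natDegree_lt
      calc (polyOf a * polyOf b + polyOf c * polyOf d).natDegree
          ≤ max (polyOf a * polyOf b).natDegree (polyOf c * polyOf d).natDegree :=
            Polynomial.natDegree_add_le _ _
        _ < m + n - 1 := by
            have h1 := Polynomial.natDegree_mul_le (p := polyOf a) (q := polyOf b)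
            have h2 := Polynomial.natDegree_mul_le (p := polyOf c) (q := polyOf d)
            have := polyOf_natDegree_lt a hm
            have := polyOf_natDegree_lt b hn
            have := polyOf_natDegree_lt c hm
            have := polyOf_natDegree_lt d hn
            omega
        _ ≤ l := hl
  · intro h
    funext l
    have := congrArg (fun p => Polynomial.coeff p (l : ℕ)) h
    simp only [Polynomial.coeff_zero] at this
    simp [liftS, liftS_decomp a c b d (l : ℕ), this]

lemma span_pair_of_finrank_le_two {m : ℕ} (V : Submodule ℝ (Fin m → ℝ))
    (h : Module.finrank ℝ V ≤ 2) : ∃ a c : Fin m → ℝ, V ≤ Submodule.span ℝ {a, c} := by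
  classical
  have : FiniteDimensional ℝ V := FiniteDimensional.finiteDimensional_submodule V
  let b := Module.finBasis ℝ V
  set r := Module.finrank ℝ V with hr
  let a : Fin m → ℝ := if h0 : 0 < r then (b ⟨0, h0⟩ : Fin m → ℝ) else 0
  let c : Fin m → ℝ := if h1 : 1 < r then (b ⟨1, h1⟩ : Fin m → ℝ) else 0
  refine ⟨a, c, ?_⟩
  have h1 : Submodule.span ℝ (Set.range b) = (⊤ : Submodule ℝ V) := b.span_eq
  have h2 := congrArg (Submodule.map V.subtype) h1
  rw [Submodule.map_span, Submodule.map_top, Submodule.range_subtype] at h2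
  intro x hx
  rw [← h2] at hx
  refine Submodule.span_le.mpr ?_ hx
  rintro y ⟨yy, ⟨i, rfl⟩, rfl⟩
  have hi : (i : ℕ) = 0 ∨ (i : ℕ) = 1 := by omega
  have h0 : 0 < r := lt_of_le_of_lt (Nat.zero_le _) i.2
  rcases hi with hi | hi
  · have : i = ⟨0, h0⟩ := by ext; exact hi
    apply Submodule.subset_span
    left
    simp only [a, this]
    rw [dif_pos h0]
    rfl
  · have hlt : 1 < r := by omega
    have : i = ⟨1, hlt⟩ := by ext; exact hi
    apply Submodule.subset_span
    right
    simp only [c, this]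
    rw [dif_pos hlt]
    rfl

lemma exists_decomp_of_rank_le_two {m n : ℕ} (Q : Matrix (Fin m) (Fin n) ℝ)
    (h : Q.rank ≤ 2) :
    ∃ (a c : Fin m → ℝ) (b d : Fin n → ℝ), ∀ k l, Q k l = a k * b l + c k * d l := by
  classical
  rw [Matrix.rank_eq_finrank_span_cols] at h
  obtain ⟨a, c, hac⟩ := span_pair_of_finrank_le_two _ h
  have hcol : ∀ j : Fin n, ∃ s t : ℝ, s • a + t • c = fun k => Q k j := by
    intro j
    rw [← Submodule.mem_span_pair]
    apply hac
    apply Submodule.subset_span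
    exact ⟨j, rfl⟩
  choose s t hst using hcol
  refine ⟨a, c, s, t, fun k l => ?_⟩
  have := congrFun (hst l) k
  simp only [Pi.add_apply, Pi.smul_apply, smul_eq_mul] at this
  rw [← this]; ring

lemma rank_decomp_le_two {m n : ℕ} (a c : Fin m → ℝ) (b d : Fin n → ℝ) :
    (Matrix.of fun k l => a k * b l + c k * d l).rank ≤ 2 := by
  classical
  rw [Matrix.rank_eq_finrank_span_cols]
  have hsub : Set.range (Matrix.of fun k l => a k * b l + c k * d l).transpose
      ⊆ (Submodule.span ℝ ({a, c} : Set (Fin m → ℝ)) : Set (Fin m → ℝ)) := by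
    rintro x ⟨j, rfl⟩
    have : (Matrix.of fun k l => a k * b l + c k * d l).transpose j
        ∈ Submodule.span ℝ ({a, c} : Set (Fin m → ℝ)) := by
      rw [Submodule.mem_span_pair]
      refine ⟨b j, d j, ?_⟩
      funext k
      simp [Matrix.transpose]
      ring
    exact this
  have hle := Submodule.span_le.mpr hsub
  refine le_trans (Submodule.finrank_mono hle) ?_
  refine (finrank_span_le_card ({a, c} : Set (Fin m → ℝ))).trans ?_
  have hsub2 : ({a, c} : Set (Fin m → ℝ)).toFinset ⊆ ({a, c} : Finset (Fin m → ℝ)) := by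
    intro x hx
    simp at hx ⊢
    tauto
  refine (Finset.card_le_card hsub2).trans ?_
  refine (Finset.card_insert_le _ _).trans ?_
  simp

lemma pad1_succ {d : ℕ} (u : Fin d → ℝ) (i : ℕ) : pad1 u (i + 1) = (polyOf u).coeff i := by
  rw [polyOf_coeff, pad1]
  by_cases h : i < d
  · rw [dif_pos (by omega), dif_pos h]; congr 1
  · rw [dif_neg (by omega), dif_neg h]

lemma pad1_eq_X_mul {d : ℕ} (u : Fin d → ℝ) (i : ℕ) : pad1 u i = (X * polyOf u).coeff i := by
  cases i with
  | zero => simp [pad1]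
  | succ i => rw [Polynomial.coeff_X_mul, pad1_succ]

lemma polyOf_pad_succ {e m : ℕ} (u : Fin e → ℝ) (he : e ≤ m) :
    polyOf (fun k : Fin m => pad1 u ((k : ℕ) + 1)) = polyOf u := by
  ext i
  rw [polyOf_coeff]
  by_cases h : i < m
  · rw [dif_pos h, pad1_succ]
  · rw [dif_neg h, polyOf_coeff, dif_neg (by omega)]

lemma polyOf_pad {e m : ℕ} (u : Fin e → ℝ) (he : e < m) :
    polyOf (fun k : Fin m => pad1 u (k : ℕ)) = X * polyOf u := by
  ext i
  rw [polyOf_coeff]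
  by_cases h : i < m
  · rw [dif_pos h, pad1_eq_X_mul]
  · rw [dif_neg h]
    cases i with
    | zero => omega
    | succ i => rw [Polynomial.coeff_X_mul, polyOf_coeff, dif_neg (by omega)]

lemma polyOf_neg {d : ℕ} (u : Fin d → ℝ) :
    polyOf (fun i => -(u i)) = -polyOf u := by
  ext i
  rw [Polynomial.coeff_neg, polyOf_coeff, polyOf_coeff]
  by_cases h : i < d
  · rw [dif_pos h, dif_pos h]
  · rw [dif_neg h, dif_neg h]; simp

lemma pad1_smul {d : ℕ} (t : ℝ) (u : Fin d → ℝ) (i : ℕ) :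
    pad1 (fun j => t * u j) i = t * pad1 u i := by
  unfold pad1
  split <;> simp

end Stmt5Aux
namespace Stmt5Aux
open Polynomial

lemma N0set_subset {m n : ℕ} (hm : 2 ≤ m) (hn : 2 ≤ n) :
    N0set m n ⊆ rankTwoNull m n := by
  rintro Q ⟨u, v, hQ⟩
  have hQeq : Q = Matrix.of fun (k : Fin m) (l : Fin n) =>
      (fun k : Fin m => pad1 u ((k : ℕ) + 1)) k * (fun l : Fin n => pad1 v (l : ℕ)) l
      + (fun k : Fin m => pad1 u (k : ℕ)) k * (fun l : Fin n => -pad1 v ((l : ℕ) + 1)) l := by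
    ext k l
    rw [Matrix.of_apply, hQ]
    ring
  constructor
  · rw [hQeq]; exact rank_decomp_le_two _ _ _ _
  · rw [hQeq, liftS_decomp_eq_zero_iff (by omega) (by omega)]
    rw [polyOf_pad_succ u (by omega), polyOf_pad u (by omega), polyOf_pad v (by omega)]
    rw [show (fun l : Fin n => -pad1 v ((l : ℕ) + 1)) = fun l : Fin n => -((fun l : Fin n => pad1 v ((l:ℕ)+1)) l) from rfl]
    rw [polyOf_neg, polyOf_pad_succ v (by omega)]
    ring

lemma N2set_subset {m n : ℕ} (hm : 3 ≤ m) (hn : 3 ≤ n) :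
    N2set m n ⊆ rankTwoNull m n := by
  rintro Q ⟨u₁, u₂, v₁, v₂, hmem, _hne, hQ⟩
  have hpoly : polyOf u₁ * polyOf v₁ + polyOf u₂ * polyOf v₂ = 0 := by
    have := hmem.2
    rwa [liftS_decomp_eq_zero_iff (by omega) (by omega)] at this
  have hQeq : Q = Matrix.of fun (k : Fin m) (l : Fin n) =>
      (fun k : Fin m => pad1 u₁ ((k : ℕ) + 1)) k * (fun l : Fin n => pad1 v₁ (l : ℕ)) l
      + (fun k : Fin m => pad1 u₂ (k : ℕ)) k * (fun l : Fin n => pad1 v₂ ((l : ℕ) + 1)) l := by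
    ext k l
    rw [Matrix.of_apply, hQ]
  constructor
  · rw [hQeq]; exact rank_decomp_le_two _ _ _ _
  · rw [hQeq, liftS_decomp_eq_zero_iff (by omega) (by omega)]
    rw [polyOf_pad_succ u₁ (by omega), polyOf_pad u₂ (by omega), polyOf_pad v₁ (by omega),
      polyOf_pad_succ v₂ (by omega)]
    calc polyOf u₁ * (X * polyOf v₁) + X * polyOf u₂ * polyOf v₂
        = X * (polyOf u₁ * polyOf v₁ + polyOf u₂ * polyOf v₂) := by ring
      _ = 0 := by rw [hpoly, mul_zero]

end Stmt5Aux
namespace Stmt5Aux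
open Polynomial

lemma forward {m n : ℕ} (hm : 3 ≤ m) (hn : 3 ≤ n) (Q : Matrix (Fin m) (Fin n) ℝ)
    (hrank : Q.rank ≤ 2) (hlift : liftS m n Q = 0)
    (hcorn : ¬ (Q ⟨m - 1, by omega⟩ ⟨0, by omega⟩ = 0 ∧ Q ⟨0, by omega⟩ ⟨n - 1, by omega⟩ = 0)) :
    Q ∈ N0set m n ∪ N2set m n := by
  classical
  obtain ⟨a, c, b, d, hdec⟩ := exists_decomp_of_rank_le_two Q hrank
  set pA := polyOf a with hpA
  set pB := polyOf b with hpB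
  set pC := polyOf c with hpC
  set pD := polyOf d with hpD
  have hQeq : Q = Matrix.of fun k l => a k * b l + c k * d l := by
    ext k l; exact hdec k l
  have hpoly : pA * pB + pC * pD = 0 := by
    rw [← liftS_decomp_eq_zero_iff (by omega : 0 < m) (by omega : 0 < n) a c b d, ← hQeq]
    exact hlift
  -- coefficients recover the vectors
  have hcoefs : ∀ (k : Fin m) (l : Fin n),
      Q k l = pA.coeff k * pB.coeff l + pC.coeff k * pD.coeff l := by
    intro k l
    rw [hdec k l, hpA, hpB, hpC, hpD,
      polyOf_coeff_lt a k, polyOf_coeff_lt b l, polyOf_coeff_lt c k, polyOf_coeff_lt d l]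
  -- Q is nonzero (otherwise both corners vanish)
  by_cases hQ0 : Q = 0
  · exfalso
    apply hcorn
    constructor <;> simp [hQ0]
  -- all four polynomials are nonzero
  have hzero_of : (pA = 0 ∨ pB = 0) → (pC = 0 ∨ pD = 0) → Q = 0 := by
    intro h1 h2
    ext k l
    rw [hcoefs k l]
    rcases h1 with h1 | h1 <;> rcases h2 with h2 | h2 <;>
      simp [h1, h2]
  have hAne : pA ≠ 0 := by
    intro h
    apply hQ0
    refine hzero_of (Or.inl h) (mul_eq_zero.mp ?_)
    have := hpoly
    rw [h, zero_mul, zero_add] at this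
    exact this
  have hBne : pB ≠ 0 := by
    intro h
    apply hQ0
    refine hzero_of (Or.inr h) (mul_eq_zero.mp ?_)
    have := hpoly
    rw [h, mul_zero, zero_add] at this
    exact this
  have hCne : pC ≠ 0 := by
    intro h
    apply hQ0
    refine hzero_of (mul_eq_zero.mp ?_) (Or.inl h)
    have := hpoly
    rw [h, zero_mul, add_zero] at this
    exact this
  have hDne : pD ≠ 0 := by
    intro h
    apply hQ0
    refine hzero_of (mul_eq_zero.mp ?_) (Or.inr h)
    have := hpoly
    rw [h, mul_zero, add_zero] at this
    exact this
  -- extract the gcd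
  set G := GCDMonoid.gcd pA pC with hGdef
  have hGne : G ≠ 0 := gcd_ne_zero_of_left hAne
  set P := pA / G with hPdef
  set R := pC / G with hRdef
  have hPA : pA = G * P := (EuclideanDomain.mul_div_cancel' hGne (gcd_dvd_left _ _)).symm
  have hPC : pC = G * R := (EuclideanDomain.mul_div_cancel' hGne (gcd_dvd_right _ _)).symm
  have hcop : IsCoprime P R := isCoprime_div_gcd_div_gcd hCne
  have hPne : P ≠ 0 := by intro h; rw [h, mul_zero] at hPA; exact hAne hPA
  have hRne : R ≠ 0 := by intro h; rw [h, mul_zero] at hPC; exact hCne hPC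
  have hPBRD : P * pB + R * pD = 0 := by
    have : G * (P * pB + R * pD) = 0 := by
      linear_combination hpoly - pB * hPA - pD * hPC
    rcases mul_eq_zero.mp this with h | h
    · exact absurd h hGne
    · exact h
  obtain ⟨H, hHfac⟩ : R ∣ pB := by
    refine (hcop.symm).dvd_of_dvd_mul_left ⟨-pD, ?_⟩
    linear_combination hPBRD
  have hHne : H ≠ 0 := by intro h; rw [h, mul_zero] at hHfac; exact hBne hHfac
  have hDPH : pD = -(P * H) := by
    have h0 : R * (pD + P * H) = 0 := by
      rw [hHfac] at hPBRD
      linear_combination hPBRD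
    rcases mul_eq_zero.mp h0 with h | h
    · exact absurd h hRne
    · linear_combination h
  -- degree bookkeeping
  have hdegA : G.natDegree + P.natDegree ≤ m - 1 := by
    have h0 : pA.natDegree < m := polyOf_natDegree_lt a (by omega)
    rw [hPA, Polynomial.natDegree_mul hGne hPne] at h0
    omega
  have hdegC : G.natDegree + R.natDegree ≤ m - 1 := by
    have h0 : pC.natDegree < m := polyOf_natDegree_lt c (by omega)
    rw [hPC, Polynomial.natDegree_mul hGne hRne] at h0
    omega
  have hdegB : R.natDegree + H.natDegree ≤ n - 1 := by
    have h0 : pB.natDegree < n := polyOf_natDegree_lt b (by omega)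
    rw [hHfac, Polynomial.natDegree_mul hRne hHne] at h0
    omega
  have hdegD : P.natDegree + H.natDegree ≤ n - 1 := by
    have h0 : pD.natDegree < n := polyOf_natDegree_lt d (by omega)
    rw [hDPH, Polynomial.natDegree_neg, Polynomial.natDegree_mul hPne hHne] at h0
    omega
  set pmax := max P.natDegree R.natDegree with hpmaxdef
  -- the degenerate case pmax = 0 forces Q = 0
  by_cases hpm0 : pmax = 0
  · exfalso
    apply hQ0
    have hp0 : P.natDegree = 0 := by omega
    have hr0 : R.natDegree = 0 := by omega
    have hPeq : P = C (P.coeff 0) := Polynomial.eq_C_of_natDegree_eq_zero hp0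
    have hReq : R = C (R.coeff 0) := Polynomial.eq_C_of_natDegree_eq_zero hr0
    ext k l
    rw [hcoefs k l]
    have e1 : pA.coeff (k:ℕ) = G.coeff (k:ℕ) * P.coeff 0 := by
      conv_lhs => rw [hPA, hPeq]
      rw [Polynomial.coeff_mul_C]
    have e2 : pC.coeff (k:ℕ) = G.coeff (k:ℕ) * R.coeff 0 := by
      conv_lhs => rw [hPC, hReq]
      rw [Polynomial.coeff_mul_C]
    have e3 : pB.coeff (l:ℕ) = R.coeff 0 * H.coeff (l:ℕ) := by
      conv_lhs => rw [hHfac, hReq]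
      rw [Polynomial.coeff_C_mul]
    have e4 : pD.coeff (l:ℕ) = -(P.coeff 0 * H.coeff (l:ℕ)) := by
      conv_lhs => rw [hDPH, hPeq]
      rw [Polynomial.coeff_neg, Polynomial.coeff_C_mul]
    rw [e1, e2, e3, e4]
    simp only [Matrix.zero_apply]
    ring
  have hpm : 1 ≤ pmax := by omega
  -- the two distinguished linear combinations of P and R
  set a1 : ℝ := R.coeff pmax with ha1def
  set c1 : ℝ := -(P.coeff pmax) with hc1def
  set b1 : ℝ := R.coeff 0 with hb1def
  set d1 : ℝ := -(P.coeff 0) with hd1def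
  set S' : ℝ[X] := C a1 * P + C c1 * R with hS'def
  set S : ℝ[X] := C b1 * P + C d1 * R with hSdef
  have hPhigh : ∀ k : ℕ, pmax < k → P.coeff k = 0 := fun k hk =>
    Polynomial.coeff_eq_zero_of_natDegree_lt (by omega)
  have hRhigh : ∀ k : ℕ, pmax < k → R.coeff k = 0 := fun k hk =>
    Polynomial.coeff_eq_zero_of_natDegree_lt (by omega)
  have hS'coeff : ∀ k : ℕ, pmax ≤ k → S'.coeff k = 0 := by
    intro k hk
    rw [hS'def, Polynomial.coeff_add, Polynomial.coeff_C_mul, Polynomial.coeff_C_mul]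
    rcases eq_or_lt_of_le hk with hk' | hk'
    · rw [← hk', ha1def, hc1def]; ring
    · rw [hPhigh k hk', hRhigh k hk']; ring
  have hS'deg : S'.natDegree ≤ pmax - 1 := by
    rw [Polynomial.natDegree_le_iff_coeff_eq_zero]
    intro k hk
    exact hS'coeff k (by omega)
  have hScoeff0 : S.coeff 0 = 0 := by
    rw [hSdef, Polynomial.coeff_add, Polynomial.coeff_C_mul, Polynomial.coeff_C_mul,
      hb1def, hd1def]
    ring
  have hS'ne : S' ≠ 0 := by
    intro hS'z
    have ha1c1 : a1 ≠ 0 ∨ c1 ≠ 0 := by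
      rcases max_choice P.natDegree R.natDegree with hmx | hmx
      · right
        have hmx' : pmax = P.natDegree := by rw [hpmaxdef, hmx]
        rw [hc1def, hmx']
        exact neg_ne_zero.mpr (Polynomial.leadingCoeff_ne_zero.mpr hPne)
      · left
        have hmx' : pmax = R.natDegree := by rw [hpmaxdef, hmx]
        rw [ha1def, hmx']
        exact Polynomial.leadingCoeff_ne_zero.mpr hRne
    rcases ha1c1 with hne | hne
    · -- then R divides P, so R is a unit, contradicting a1 = R.coeff pmax ≠ 0, pmax ≥ 1
      have hdvd : R ∣ P := by
        refine ⟨C (-(a1⁻¹ * c1)), ?_⟩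
        have h1 : C a1 * P = -(C c1 * R) := by linear_combination hS'z
        have h2 : P = C a1⁻¹ * (C a1 * P) := by
          rw [← mul_assoc, ← Polynomial.C_mul, inv_mul_cancel₀ hne, Polynomial.C_1, one_mul]
        rw [h2, h1]
        have e : (C (-(a1⁻¹ * c1)) : Polynomial ℝ) = C a1⁻¹ * -(C c1) := by
          rw [← Polynomial.C_neg, ← Polynomial.C_mul]
          congr 1
          ring
        rw [e]
        ring
      have hu : IsUnit R := hcop.isUnit_of_dvd' hdvd dvd_rfl
      have hz0 : R.natDegree = 0 := Polynomial.natDegree_eq_zero_of_isUnit hu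
      have := Polynomial.le_natDegree_of_ne_zero (ha1def ▸ hne)
      omega
    · have hdvd : P ∣ R := by
        refine ⟨C (-(c1⁻¹ * a1)), ?_⟩
        have h1 : C c1 * R = -(C a1 * P) := by linear_combination hS'z
        have h2 : R = C c1⁻¹ * (C c1 * R) := by
          rw [← mul_assoc, ← Polynomial.C_mul, inv_mul_cancel₀ hne, Polynomial.C_1, one_mul]
        rw [h2, h1]
        have e : (C (-(c1⁻¹ * a1)) : Polynomial ℝ) = C c1⁻¹ * -(C a1) := by
          rw [← Polynomial.C_neg, ← Polynomial.C_mul]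
          congr 1
          ring
        rw [e]
        ring
      have hu : IsUnit P := hcop.symm.isUnit_of_dvd' hdvd dvd_rfl
      have hz0 : P.natDegree = 0 := Polynomial.natDegree_eq_zero_of_isUnit hu
      have hPc : P.coeff pmax ≠ 0 := by
        intro h0
        rw [hc1def, h0, neg_zero] at hne
        exact hne rfl
      have := Polynomial.le_natDegree_of_ne_zero hPc
      omega
  -- useful max bounds
  have hpmaxH : pmax + H.natDegree ≤ n - 1 := by
    rcases max_choice P.natDegree R.natDegree with hmx | hmx <;>
      (rw [hpmaxdef, hmx]; omega)
  have hpmaxG : G.natDegree + pmax ≤ m - 1 := by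
    rcases max_choice P.natDegree R.natDegree with hmx | hmx <;>
      (rw [hpmaxdef, hmx]; omega)
  by_cases hS'0 : S'.coeff 0 = 0
  · -- degenerate pairing: both corners of Q vanish, contradiction
    exfalso
    apply hcorn
    have hScoeff : ∀ k : ℕ, pmax ≤ k → S.coeff k = 0 := by
      intro k hk
      have e1 : S.coeff k = b1 * P.coeff k + d1 * R.coeff k := by
        rw [hSdef, Polynomial.coeff_add, Polynomial.coeff_C_mul, Polynomial.coeff_C_mul]
      rcases eq_or_lt_of_le hk with hk' | hk'
      · have e0 : S'.coeff 0 = a1 * P.coeff 0 + c1 * R.coeff 0 := by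
          rw [hS'def, Polynomial.coeff_add, Polynomial.coeff_C_mul, Polynomial.coeff_C_mul]
        have h' : a1 * P.coeff 0 + c1 * R.coeff 0 = 0 := by rw [← e0]; exact hS'0
        rw [ha1def, hc1def] at h'
        rw [e1, hb1def, hd1def, ← hk']
        linear_combination -h'
      · rw [e1, hPhigh k hk', hRhigh k hk']
        ring
    have hSdeg : S.natDegree ≤ pmax - 1 := by
      rw [Polynomial.natDegree_le_iff_coeff_eq_zero]
      intro k hk
      exact hScoeff k (by omega)
    have hS'degalso := hS'deg
    constructor
    · -- Q(m,1) = 0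
      have hcQ : Q ⟨m - 1, by omega⟩ ⟨0, by omega⟩
          = pA.coeff (m-1) * pB.coeff 0 + pC.coeff (m-1) * pD.coeff 0 := hcoefs _ _
      rw [hcQ]
      have hGS : (G * S).coeff (m-1) = 0 := by
        apply Polynomial.coeff_eq_zero_of_natDegree_lt
        calc (G * S).natDegree ≤ G.natDegree + S.natDegree := Polynomial.natDegree_mul_le
          _ < m - 1 := by omega
      have eGS : (G*S).coeff (m-1) = b1 * (G*P).coeff (m-1) + d1 * (G*R).coeff (m-1) := by
        have e : G * S = C b1 * (G*P) + C d1 * (G*R) := by rw [hSdef]; ring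
        rw [e, Polynomial.coeff_add, Polynomial.coeff_C_mul, Polynomial.coeff_C_mul]
      rw [hGS] at eGS
      rw [hb1def, hd1def] at eGS
      have eA : pA.coeff (m-1) = (G*P).coeff (m-1) := by rw [hPA]
      have eC : pC.coeff (m-1) = (G*R).coeff (m-1) := by rw [hPC]
      have eB : pB.coeff 0 = R.coeff 0 * H.coeff 0 := by
        rw [hHfac, Polynomial.mul_coeff_zero]
      have eD : pD.coeff 0 = -(P.coeff 0 * H.coeff 0) := by
        rw [hDPH, Polynomial.coeff_neg, Polynomial.mul_coeff_zero]
      rw [eA, eC, eB, eD]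
      linear_combination (-(H.coeff 0)) * eGS
    · -- Q(1,n) = 0
      have hcQ : Q ⟨0, by omega⟩ ⟨n - 1, by omega⟩
          = pA.coeff 0 * pB.coeff (n-1) + pC.coeff 0 * pD.coeff (n-1) := hcoefs _ _
      rw [hcQ]
      have hSH : (S * H).coeff (n-1) = 0 := by
        apply Polynomial.coeff_eq_zero_of_natDegree_lt
        calc (S * H).natDegree ≤ S.natDegree + H.natDegree := Polynomial.natDegree_mul_le
          _ < n - 1 := by omega
      have eSH : (S*H).coeff (n-1) = b1 * (P*H).coeff (n-1) + d1 * (R*H).coeff (n-1) := by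
        have e : S * H = C b1 * (P*H) + C d1 * (R*H) := by rw [hSdef]; ring
        rw [e, Polynomial.coeff_add, Polynomial.coeff_C_mul, Polynomial.coeff_C_mul]
      rw [hSH] at eSH
      rw [hb1def, hd1def] at eSH
      have eA : pA.coeff 0 = G.coeff 0 * P.coeff 0 := by rw [hPA, Polynomial.mul_coeff_zero]
      have eC : pC.coeff 0 = G.coeff 0 * R.coeff 0 := by rw [hPC, Polynomial.mul_coeff_zero]
      have eB : pB.coeff (n-1) = (R*H).coeff (n-1) := by rw [hHfac]
      have eD : pD.coeff (n-1) = -((P*H).coeff (n-1)) := by rw [hDPH, Polynomial.coeff_neg]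
      rw [eA, eC, eB, eD]
      linear_combination (G.coeff 0) * eSH
  · -- main construction: change basis of the decomposition
    have hShigh : ∀ k : ℕ, pmax < k → S.coeff k = 0 := by
      intro k hk
      rw [hSdef, Polynomial.coeff_add, Polynomial.coeff_C_mul, Polynomial.coeff_C_mul,
        hPhigh k hk, hRhigh k hk]
      ring
    have hSdeg2 : S.natDegree ≤ pmax := by
      rw [Polynomial.natDegree_le_iff_coeff_eq_zero]
      intro k hk
      exact hShigh k hk
    set det : ℝ := a1 * d1 - b1 * c1 with hdetdef
    have hdet : det ≠ 0 := by
      have e : det = -(S'.coeff 0) := by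
        have e0 : S'.coeff 0 = a1 * P.coeff 0 + c1 * R.coeff 0 := by
          rw [hS'def, Polynomial.coeff_add, Polynomial.coeff_C_mul, Polynomial.coeff_C_mul]
        rw [hdetdef, e0, hb1def, hd1def]
        ring
      rw [e, neg_ne_zero]
      exact hS'0
    have hdet1 : det⁻¹ * det = 1 := inv_mul_cancel₀ hdet
    set A' : Polynomial ℝ := C a1 * pA + C c1 * pC with hA'def
    set C' : Polynomial ℝ := C b1 * pA + C d1 * pC with hC'def
    set B' : Polynomial ℝ := C (det⁻¹ * d1) * pB - C (det⁻¹ * b1) * pD with hB'def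
    set D' : Polynomial ℝ := C (det⁻¹ * a1) * pD - C (det⁻¹ * c1) * pB with hD'def
    have hcoeffid : ∀ (x y : ℕ),
        A'.coeff x * B'.coeff y + C'.coeff x * D'.coeff y
          = pA.coeff x * pB.coeff y + pC.coeff x * pD.coeff y := by
      intro x y
      have eA : A'.coeff x = a1 * pA.coeff x + c1 * pC.coeff x := by
        rw [hA'def, Polynomial.coeff_add, Polynomial.coeff_C_mul, Polynomial.coeff_C_mul]
      have eC : C'.coeff x = b1 * pA.coeff x + d1 * pC.coeff x := by
        rw [hC'def, Polynomial.coeff_add, Polynomial.coeff_C_mul, Polynomial.coeff_C_mul]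
      have eB : B'.coeff y = det⁻¹ * d1 * pB.coeff y - det⁻¹ * b1 * pD.coeff y := by
        rw [hB'def, Polynomial.coeff_sub, Polynomial.coeff_C_mul, Polynomial.coeff_C_mul]
      have eD : D'.coeff y = det⁻¹ * a1 * pD.coeff y - det⁻¹ * c1 * pB.coeff y := by
        rw [hD'def, Polynomial.coeff_sub, Polynomial.coeff_C_mul, Polynomial.coeff_C_mul]
      rw [eA, eC, eB, eD]
      linear_combination (pA.coeff x * pB.coeff y + pC.coeff x * pD.coeff y) * hdet1
        - det⁻¹ * (pA.coeff x * pB.coeff y + pC.coeff x * pD.coeff y) * hdetdef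
    have hA'eq : A' = G * S' := by
      rw [hA'def, hS'def, hPA, hPC]
      ring
    have hC'eq : C' = G * S := by
      rw [hC'def, hSdef, hPA, hPC]
      ring
    have hB'eq : B' = C det⁻¹ * (S * H) := by
      rw [hB'def, hHfac, hDPH, hSdef, Polynomial.C_mul, Polynomial.C_mul]
      ring
    have hD'eq : D' = -(C det⁻¹ * (S' * H)) := by
      rw [hD'def, hHfac, hDPH, hS'def, Polynomial.C_mul, Polynomial.C_mul]
      ring
    -- coefficient vanishing
    have hA'coeff : ∀ k : ℕ, m - 1 ≤ k → A'.coeff k = 0 := by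
      intro k hk
      rw [hA'eq]
      apply Polynomial.coeff_eq_zero_of_natDegree_lt
      have h1 := Polynomial.natDegree_mul_le (p := G) (q := S')
      omega
    have hB'coeff0 : B'.coeff 0 = 0 := by
      rw [hB'eq, Polynomial.mul_coeff_zero, Polynomial.mul_coeff_zero, hScoeff0]
      ring
    have hB'coeff : ∀ l : ℕ, n ≤ l → B'.coeff l = 0 := by
      intro l hl
      rw [hB'eq]
      apply Polynomial.coeff_eq_zero_of_natDegree_lt
      have h1 := Polynomial.natDegree_C_mul_le (det⁻¹) (S * H)
      have h2 := Polynomial.natDegree_mul_le (p := S) (q := H)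
      omega
    have hC'coeff0 : C'.coeff 0 = 0 := by
      rw [hC'eq, Polynomial.mul_coeff_zero, hScoeff0]
      ring
    have hC'coeff : ∀ k : ℕ, m ≤ k → C'.coeff k = 0 := by
      intro k hk
      rw [hC'eq]
      apply Polynomial.coeff_eq_zero_of_natDegree_lt
      have h1 := Polynomial.natDegree_mul_le (p := G) (q := S)
      omega
    have hD'coeff : ∀ l : ℕ, n - 1 ≤ l → D'.coeff l = 0 := by
      intro l hl
      rw [hD'eq, Polynomial.coeff_neg]
      rw [Polynomial.coeff_eq_zero_of_natDegree_lt ?_, neg_zero]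
      have h1 := Polynomial.natDegree_C_mul_le (det⁻¹) (S' * H)
      have h2 := Polynomial.natDegree_mul_le (p := S') (q := H)
      omega
    -- the vectors
    set u₁ : Fin (m-1) → ℝ := fun i => A'.coeff (i : ℕ) with hu₁def
    set v₁ : Fin (n-1) → ℝ := fun i => B'.coeff ((i : ℕ) + 1) with hv₁def
    set u₂ : Fin (m-1) → ℝ := fun i => C'.coeff ((i : ℕ) + 1) with hu₂def
    set v₂ : Fin (n-1) → ℝ := fun i => D'.coeff (i : ℕ) with hv₂def
    have hPu₁ : polyOf u₁ = A' := by
      ext i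
      rw [polyOf_coeff]
      split
      · rfl
      · rw [hA'coeff i (by omega)]
    have hPv₂ : polyOf v₂ = D' := by
      ext i
      rw [polyOf_coeff]
      split
      · rfl
      · rw [hD'coeff i (by omega)]
    have hPv₁ : X * polyOf v₁ = B' := by
      ext i
      cases i with
      | zero =>
        rw [Polynomial.mul_coeff_zero, Polynomial.coeff_X_zero, zero_mul, hB'coeff0]
      | succ i =>
        rw [Polynomial.coeff_X_mul, polyOf_coeff]
        split
        · rfl
        · rw [hB'coeff (i+1) (by omega)]
    have hPu₂ : X * polyOf u₂ = C' := by
      ext i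
      cases i with
      | zero =>
        rw [Polynomial.mul_coeff_zero, Polynomial.coeff_X_zero, zero_mul, hC'coeff0]
      | succ i =>
        rw [Polynomial.coeff_X_mul, polyOf_coeff]
        split
        · rfl
        · rw [hC'coeff (i+1) (by omega)]
    have hprodid : A' * B' + C' * D' = 0 := by
      have e : A' * B' + C' * D' = C det⁻¹ * C det * (pA * pB + pC * pD) := by
        rw [hA'def, hB'def, hC'def, hD'def]
        rw [show (C det : Polynomial ℝ) = C a1 * C d1 - C b1 * C c1 by
          rw [hdetdef, map_sub, Polynomial.C_mul, Polynomial.C_mul]]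
        rw [Polynomial.C_mul, Polynomial.C_mul, Polynomial.C_mul, Polynomial.C_mul]
        ring
      rw [e, hpoly, mul_zero]
    have hpolyW : polyOf u₁ * polyOf v₁ + polyOf u₂ * polyOf v₂ = 0 := by
      have hX : X * (polyOf u₁ * polyOf v₁ + polyOf u₂ * polyOf v₂) = A' * B' + C' * D' := by
        rw [← hPu₁, ← hPv₁, ← hPu₂, ← hPv₂]
        ring
      rw [hprodid] at hX
      rcases mul_eq_zero.mp hX with h | h
      · exact absurd h Polynomial.X_ne_zero
      · exact h
    have hQform : ∀ (k : Fin m) (l : Fin n),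
        Q k l = pad1 u₁ ((k:ℕ)+1) * pad1 v₁ (l:ℕ) + pad1 u₂ (k:ℕ) * pad1 v₂ ((l:ℕ)+1) := by
      intro k l
      rw [pad1_succ u₁, pad1_eq_X_mul v₁, pad1_eq_X_mul u₂, pad1_succ v₂,
        hPu₁, hPv₁, hPu₂, hPv₂, hcoefs k l]
      exact (hcoeffid (k:ℕ) (l:ℕ)).symm
    by_cases hW : (Matrix.of fun i j => u₁ i * v₁ j + u₂ i * v₂ j)
        = (0 : Matrix (Fin (m-1)) (Fin (n-1)) ℝ)
    · -- degenerate: Q lies in N0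
      left
      have hWent : ∀ (i : Fin (m-1)) (j : Fin (n-1)), u₁ i * v₁ j + u₂ i * v₂ j = 0 := by
        intro i j
        have := congrFun (congrFun hW i) j
        simpa using this
      have hCdetne : (C det⁻¹ : Polynomial ℝ) ≠ 0 := by
        simpa using inv_ne_zero hdet
      have hA'ne : A' ≠ 0 := by
        rw [hA'eq]
        exact mul_ne_zero hGne hS'ne
      have hD'ne : D' ≠ 0 := by
        rw [hD'eq, neg_ne_zero]
        exact mul_ne_zero hCdetne (mul_ne_zero hS'ne hHne)
      have hSne : S ≠ 0 := by
        intro hS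
        apply hQ0
        have hB0 : B' = 0 := by rw [hB'eq, hS, zero_mul, mul_zero]
        have hC0 : C' = 0 := by rw [hC'eq, hS, mul_zero]
        ext k l
        rw [hQform k l, pad1_eq_X_mul v₁, pad1_eq_X_mul u₂, hPv₁, hPu₂, hB0, hC0]
        simp
      have hB'ne : B' ≠ 0 := by
        rw [hB'eq]
        exact mul_ne_zero hCdetne (mul_ne_zero hSne hHne)
      have hC'ne : C' ≠ 0 := by
        rw [hC'eq]
        exact mul_ne_zero hGne hSne
      -- nonvanishing entries
      have hu₁ne : ∃ i : Fin (m-1), u₁ i ≠ 0 := by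
        have h1 : A'.natDegree < m - 1 := by
          by_contra hcon
          push_neg at hcon
          exact (Polynomial.leadingCoeff_ne_zero.mpr hA'ne) (hA'coeff _ hcon)
        exact ⟨⟨A'.natDegree, h1⟩, Polynomial.leadingCoeff_ne_zero.mpr hA'ne⟩
      have hv₂ne : ∃ j : Fin (n-1), v₂ j ≠ 0 := by
        have h1 : D'.natDegree < n - 1 := by
          by_contra hcon
          push_neg at hcon
          exact (Polynomial.leadingCoeff_ne_zero.mpr hD'ne) (hD'coeff _ hcon)
        exact ⟨⟨D'.natDegree, h1⟩, Polynomial.leadingCoeff_ne_zero.mpr hD'ne⟩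
      have hv₁ne : ∃ j : Fin (n-1), v₁ j ≠ 0 := by
        have h1 : B'.natDegree ≤ n - 1 := by
          by_contra hcon
          push_neg at hcon
          exact (Polynomial.leadingCoeff_ne_zero.mpr hB'ne) (hB'coeff _ (by omega))
        have h2 : 1 ≤ B'.natDegree := by
          by_contra hcon
          push_neg at hcon
          have h3 : B'.natDegree = 0 := by omega
          apply (Polynomial.leadingCoeff_ne_zero.mpr hB'ne)
          rw [Polynomial.leadingCoeff, h3]
          exact hB'coeff0
        refine ⟨⟨B'.natDegree - 1, by omega⟩, ?_⟩
        have e : (B'.natDegree - 1) + 1 = B'.natDegree := by omega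
        rw [hv₁def]
        simpa [e] using Polynomial.leadingCoeff_ne_zero.mpr hB'ne
      obtain ⟨i₀, hi₀⟩ := hu₁ne
      obtain ⟨j₀, hj₀⟩ := hv₂ne
      have hu₂i₀ : u₂ i₀ ≠ 0 := by
        intro h0
        obtain ⟨j₁, hj₁⟩ := hv₁ne
        have h := hWent i₀ j₁
        rw [h0, zero_mul, add_zero] at h
        exact hj₁ ((mul_eq_zero.mp h).resolve_left hi₀)
      set κ : ℝ := u₂ i₀ / u₁ i₀ with hκdef
      have hκ : u₂ i₀ = κ * u₁ i₀ := by
        rw [hκdef, div_mul_cancel₀ _ hi₀]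
      have hv₁eq : ∀ j, v₁ j = -(κ * v₂ j) := by
        intro j
        have h := hWent i₀ j
        have h2 : u₁ i₀ * (v₁ j + κ * v₂ j) = 0 := by
          linear_combination h - (v₂ j) * hκ
        have h3 := (mul_eq_zero.mp h2).resolve_left hi₀
        linear_combination h3
      have hu₂eq : ∀ i, u₂ i = κ * u₁ i := by
        intro i
        have h := hWent i j₀
        rw [hv₁eq j₀] at h
        have h2 : (u₂ i - κ * u₁ i) * v₂ j₀ = 0 := by linear_combination h
        rcases mul_eq_zero.mp h2 with h3 | h3
        · linear_combination h3
        · exact absurd h3 hj₀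
      refine ⟨u₁, fun j => -(κ * v₂ j), ?_⟩
      intro k l
      have hv₁f : v₁ = fun j => (-κ) * v₂ j := funext fun j => by rw [hv₁eq j]; ring
      have hu₂f : u₂ = fun i => κ * u₁ i := funext hu₂eq
      have e1 : pad1 v₁ (l:ℕ) = (-κ) * pad1 v₂ (l:ℕ) := by rw [hv₁f, pad1_smul]
      have e2 : pad1 u₂ (k:ℕ) = κ * pad1 u₁ (k:ℕ) := by rw [hu₂f, pad1_smul]
      have e3 : pad1 (fun j => -(κ * v₂ j)) (l:ℕ) = (-κ) * pad1 v₂ (l:ℕ) := by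
        rw [show (fun j => -(κ * v₂ j)) = fun j => (-κ) * v₂ j from funext fun j => by ring,
          pad1_smul]
      have e4 : pad1 (fun j => -(κ * v₂ j)) ((l:ℕ)+1) = (-κ) * pad1 v₂ ((l:ℕ)+1) := by
        rw [show (fun j => -(κ * v₂ j)) = fun j => (-κ) * v₂ j from funext fun j => by ring,
          pad1_smul]
      rw [hQform k l, e1, e2, e3, e4]
      ring
    · -- generic: Q lies in N2
      right
      refine ⟨u₁, u₂, v₁, v₂, ⟨?_, ?_⟩, hW, hQform⟩
      · exact rank_decomp_le_two u₁ u₂ v₁ v₂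
      · rw [liftS_decomp_eq_zero_iff (by omega) (by omega)]
        exact hpolyW

end Stmt5Aux
/-- for `m, n ≥ 3`, outside `M(m,n)` the rank-two null space is exactly
`N0(m,n) ∪ N2(m,n)`. -/
theorem stmt5 (m n : ℕ) (hm : 3 ≤ m) (hn : 3 ≤ n) :
    rankTwoNull m n \ Mexc m n (by omega) (by omega)
      = (N0set m n ∪ N2set m n) \ Mexc m n (by omega) (by omega) := by
  ext Q
  simp only [Set.mem_diff, Set.mem_union]
  constructor
  · rintro ⟨hQ, hQM⟩
    refine ⟨?_, hQM⟩
    have hcorn : ¬ (Q ⟨m - 1, by omega⟩ ⟨0, by omega⟩ = 0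
        ∧ Q ⟨0, by omega⟩ ⟨n - 1, by omega⟩ = 0) := by
      intro h
      exact hQM ⟨hQ, h.1, h.2⟩
    exact Stmt5Aux.forward hm hn Q hQ.1 hQ.2 hcorn
  · rintro ⟨hQ, hQM⟩
    refine ⟨?_, hQM⟩
    rcases hQ with h | h
    · exact Stmt5Aux.N0set_subset (by omega) (by omega) h
    · exact Stmt5Aux.N2set_subset hm hn h
end
end

section
/- For every integer n ≥ 3, the set (N(S_{(n,n)}, 2) ∩ M(n,n)) \ (N0(n,n) ∪ N2(n,n)) is non-empty and has Hausdorff dimension at least n − 1. -/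
open scoped BigOperators
open MeasureTheory

noncomputable section

/-! ### Auxiliary constructions for Statement 6 -/

/-- The fixed vector `u = e₂` (0-based index 1). -/
def uu (n : ℕ) : Fin n → ℝ := fun i => if (i : ℕ) = 1 then 1 else 0

/-- The vector `v` parametrized by `w : ℝ^{n-1}`, with `v₀ = w₀`, `v₁ = 0`,
`vᵢ = w_{i-1}` for `i ≥ 2`. -/
def vv (n : ℕ) (hn : 3 ≤ n) (w : Fin (n - 1) → ℝ) : Fin n → ℝ := fun i =>
  if _h1 : (i : ℕ) = 1 then 0
  else if _h0 : (i : ℕ) = 0 then w ⟨0, by omega⟩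
  else w ⟨(i : ℕ) - 1, by have := i.isLt; omega⟩

/-- The skew-symmetric rank-two family `Q = u vᵀ − v uᵀ`. -/
def FF (n : ℕ) (hn : 3 ≤ n) (w : Fin (n - 1) → ℝ) : Matrix (Fin n) (Fin n) ℝ :=
  fun k l => uu n k * vv n hn w l - vv n hn w k * uu n l

/-- Embedding of indices avoiding position 1. -/
def emb (n : ℕ) (hn : 3 ≤ n) (j : Fin (n - 1)) : Fin n :=
  if _h : (j : ℕ) = 0 then ⟨0, by omega⟩ else ⟨(j : ℕ) + 1, by have := j.isLt; omega⟩

/-- A Lipschitz retraction recovering `w` from `FF n hn w`. -/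
def GG (n : ℕ) (hn : 3 ≤ n) (Q : Matrix (Fin n) (Fin n) ℝ) : Fin (n - 1) → ℝ :=
  fun j => -(Q (emb n hn j) ⟨1, by omega⟩)

lemma pad1_eq_zero {d : ℕ} (u : Fin d → ℝ) {i : ℕ} (h : ¬(1 ≤ i ∧ i ≤ d)) : pad1 u i = 0 :=
  dif_neg h

lemma liftS_skew (n : ℕ) (Q : Matrix (Fin n) (Fin n) ℝ)
    (h : ∀ k l, Q k l = -(Q l k)) : liftS n n Q = 0 := by
  funext l
  show (∑ k : Fin n, ∑ j : Fin n, if (k : ℕ) + (j : ℕ) = (l : ℕ) then Q k j else 0) = 0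
  have key : (∑ k : Fin n, ∑ j : Fin n, if (k : ℕ) + (j : ℕ) = (l : ℕ) then Q k j else 0)
      = -(∑ k : Fin n, ∑ j : Fin n, if (k : ℕ) + (j : ℕ) = (l : ℕ) then Q k j else 0) := by
    calc (∑ k : Fin n, ∑ j : Fin n, if (k : ℕ) + (j : ℕ) = (l : ℕ) then Q k j else 0)
        = ∑ j : Fin n, ∑ k : Fin n, (if (k : ℕ) + (j : ℕ) = (l : ℕ) then Q k j else 0) :=
          Finset.sum_comm
      _ = ∑ j : Fin n, ∑ k : Fin n, -(if (j : ℕ) + (k : ℕ) = (l : ℕ) then Q j k else 0) := by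
          refine Finset.sum_congr rfl fun j _ => Finset.sum_congr rfl fun k _ => ?_
          rw [h k j, Nat.add_comm (k : ℕ) (j : ℕ)]
          by_cases hc : (j : ℕ) + (k : ℕ) = (l : ℕ) <;> simp [hc]
      _ = -(∑ j : Fin n, ∑ k : Fin n, (if (j : ℕ) + (k : ℕ) = (l : ℕ) then Q j k else 0)) := by
          simp
  linarith

lemma FF_rank (n : ℕ) (hn : 3 ≤ n) (w : Fin (n - 1) → ℝ) : (FF n hn w).rank ≤ 2 := by
  classical
  set C : Matrix (Fin n) (Fin 2) ℝ :=
    fun k i => if i = (0 : Fin 2) then uu n k else vv n hn w k with hC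
  set D : Matrix (Fin 2) (Fin n) ℝ :=
    fun i l => if i = (0 : Fin 2) then vv n hn w l else -(uu n l) with hD
  have hCD : FF n hn w = C * D := by
    ext k l
    rw [Matrix.mul_apply]
    simp only [FF, Matrix.mul_apply, Fin.sum_univ_two, hC, hD]
    norm_num
    ring
  calc (FF n hn w).rank = (C * D).rank := by rw [hCD]
    _ ≤ C.rank := Matrix.rank_mul_le_left C D
    _ ≤ Fintype.card (Fin 2) := Matrix.rank_le_card_width C
    _ = 2 := by simp

lemma vv_zero (n : ℕ) (hn : 3 ≤ n) (w : Fin (n - 1) → ℝ) (h : 0 < n) :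
    vv n hn w ⟨0, h⟩ = w ⟨0, by omega⟩ := by
  simp [vv]

lemma vv_one (n : ℕ) (hn : 3 ≤ n) (w : Fin (n - 1) → ℝ) (h : 1 < n) :
    vv n hn w ⟨1, h⟩ = 0 := by
  simp [vv]

lemma vv_big (n : ℕ) (hn : 3 ≤ n) (w : Fin (n - 1) → ℝ) (i : Fin n) (h : 2 ≤ (i : ℕ)) :
    vv n hn w i = w ⟨(i : ℕ) - 1, by have := i.isLt; omega⟩ := by
  simp only [vv]
  rw [dif_neg (by omega), dif_neg (by omega)]

lemma FF_mem (n : ℕ) (hn : 3 ≤ n) (w : Fin (n - 1) → ℝ)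
    (h0 : w ⟨0, by omega⟩ ≠ 0) (h1 : w ⟨n - 2, by omega⟩ ≠ 0) :
    FF n hn w ∈ ((rankTwoNull n n ∩ Mexc n n (lt_of_lt_of_le (by norm_num) hn)
      (lt_of_lt_of_le (by norm_num) hn)) \
      (N0set n n ∪ N2set n n)) := by
  have hu1 : uu n ⟨1, by omega⟩ = 1 := if_pos rfl
  have huk : ∀ (i : Fin n), (i : ℕ) ≠ 1 → uu n i = 0 := fun i h => if_neg h
  have hv0 : vv n hn w ⟨0, by omega⟩ = w ⟨0, by omega⟩ := vv_zero n hn w (by omega)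
  have hv1 : vv n hn w ⟨1, by omega⟩ = 0 := vv_one n hn w (by omega)
  have hvlast : vv n hn w ⟨n - 1, by omega⟩ = w ⟨n - 2, by omega⟩ := by
    rw [vv_big n hn w ⟨n - 1, by omega⟩ (show 2 ≤ n - 1 by omega)]
    exact congrArg w (Fin.ext (show n - 1 - 1 = n - 2 by omega))
  have E1 : FF n hn w ⟨n - 1, by omega⟩ ⟨1, by omega⟩ = -(w ⟨n - 2, by omega⟩) := by
    show uu n ⟨n - 1, by omega⟩ * vv n hn w ⟨1, by omega⟩
        - vv n hn w ⟨n - 1, by omega⟩ * uu n ⟨1, by omega⟩ = _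
    rw [hu1, hv1, hvlast, huk ⟨n - 1, by omega⟩ (show n - 1 ≠ 1 by omega)]
    ring
  have E2 : FF n hn w ⟨n - 1, by omega⟩ ⟨0, by omega⟩ = 0 := by
    show uu n ⟨n - 1, by omega⟩ * vv n hn w ⟨0, by omega⟩
        - vv n hn w ⟨n - 1, by omega⟩ * uu n ⟨0, by omega⟩ = 0
    rw [huk ⟨n - 1, by omega⟩ (show n - 1 ≠ 1 by omega),
      huk ⟨0, by omega⟩ (show (0 : ℕ) ≠ 1 by omega)]
    ring
  have E3 : FF n hn w ⟨0, by omega⟩ ⟨1, by omega⟩ = -(w ⟨0, by omega⟩) := by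
    show uu n ⟨0, by omega⟩ * vv n hn w ⟨1, by omega⟩
        - vv n hn w ⟨0, by omega⟩ * uu n ⟨1, by omega⟩ = _
    rw [hu1, hv0, huk ⟨0, by omega⟩ (show (0 : ℕ) ≠ 1 by omega)]
    ring
  have E4 : FF n hn w ⟨1, by omega⟩ ⟨0, by omega⟩ = w ⟨0, by omega⟩ := by
    show uu n ⟨1, by omega⟩ * vv n hn w ⟨0, by omega⟩
        - vv n hn w ⟨1, by omega⟩ * uu n ⟨0, by omega⟩ = _
    rw [hu1, hv0, hv1, huk ⟨0, by omega⟩ (show (0 : ℕ) ≠ 1 by omega)]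
    ring
  have E5 : FF n hn w ⟨0, by omega⟩ ⟨n - 1, by omega⟩ = 0 := by
    show uu n ⟨0, by omega⟩ * vv n hn w ⟨n - 1, by omega⟩
        - vv n hn w ⟨0, by omega⟩ * uu n ⟨n - 1, by omega⟩ = 0
    rw [huk ⟨n - 1, by omega⟩ (show n - 1 ≠ 1 by omega),
      huk ⟨0, by omega⟩ (show (0 : ℕ) ≠ 1 by omega)]
    ring
  have hnull : FF n hn w ∈ rankTwoNull n n := by
    refine ⟨FF_rank n hn w, liftS_skew n _ fun k l => ?_⟩
    show uu n k * vv n hn w l - vv n hn w k * uu n l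
        = -(uu n l * vv n hn w k - vv n hn w l * uu n k)
    ring
  constructor
  · exact ⟨hnull, hnull, E2, E5⟩
  · rintro (⟨u', v', hq⟩ | ⟨u₁, u₂, v₁, v₂, _, _, hq⟩)
    · -- N0set case
      have q1 := hq ⟨n - 1, by omega⟩ ⟨1, by omega⟩
      have q2 := hq ⟨n - 1, by omega⟩ ⟨0, by omega⟩
      have q3 := hq ⟨0, by omega⟩ ⟨1, by omega⟩
      rw [E1] at q1
      rw [E2] at q2
      rw [E3] at q3
      simp only [Fin.val_mk] at q1 q2 q3
      rw [show n - 1 + 1 = n from by omega] at q1 q2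
      rw [pad1_eq_zero u' (i := n) (by omega)] at q1 q2
      rw [pad1_eq_zero v' (i := 0) (by omega)] at q2
      rw [pad1_eq_zero u' (i := 0) (by omega)] at q3
      simp only [zero_mul, mul_zero, zero_sub, sub_zero, zero_add] at q1 q2 q3
      -- q1 : -(w ⟨n-2⟩) = -(pad1 u' (n-1) * pad1 v' 2)
      -- q2 : 0 = -(pad1 u' (n-1) * pad1 v' 1)
      -- q3 : -(w ⟨0⟩) = pad1 u' 1 * pad1 v' 1
      have hune : pad1 u' (n - 1) ≠ 0 := by
        intro hz
        rw [hz, zero_mul] at q1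
        exact h1 (by linarith)
      have hprod : pad1 u' (n - 1) * pad1 v' 1 = 0 := by linarith
      have hv1z : pad1 v' 1 = 0 := by
        rcases mul_eq_zero.mp hprod with h | h
        · exact absurd h hune
        · exact h
      rw [hv1z, mul_zero] at q3
      exact h0 (by linarith)
    · -- N2set case
      have q1 := hq ⟨n - 1, by omega⟩ ⟨1, by omega⟩
      have q2 := hq ⟨n - 1, by omega⟩ ⟨0, by omega⟩
      have q3 := hq ⟨1, by omega⟩ ⟨0, by omega⟩
      rw [E1] at q1
      rw [E2] at q2
      rw [E4] at q3
      simp only [Fin.val_mk] at q1 q2 q3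
      rw [show n - 1 + 1 = n from by omega] at q1 q2
      rw [pad1_eq_zero u₁ (i := n) (by omega)] at q1 q2
      rw [pad1_eq_zero v₁ (i := 0) (by omega)] at q3
      simp only [zero_mul, mul_zero, zero_add, add_zero] at q1 q2 q3
      -- q1 : -(w ⟨n-2⟩) = pad1 u₂ (n-1) * pad1 v₂ 2
      -- q2 : 0 = pad1 u₂ (n-1) * pad1 v₂ 1
      -- q3 : w ⟨0⟩ = pad1 u₂ 1 * pad1 v₂ 1
      have hune : pad1 u₂ (n - 1) ≠ 0 := by
        intro hz
        rw [hz, zero_mul] at q1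
        exact h1 (by linarith)
      have hv2z : pad1 v₂ (0 + 1) = 0 := by
        rcases mul_eq_zero.mp q2.symm with h | h
        · exact absurd h hune
        · exact h
      rw [hv2z, mul_zero] at q3
      exact h0 q3

lemma emb_val (n : ℕ) (hn : 3 ≤ n) (j : Fin (n - 1)) :
    ((emb n hn j : Fin n) : ℕ) = if (j : ℕ) = 0 then 0 else (j : ℕ) + 1 := by
  simp only [emb]
  split <;> rfl

lemma GG_FF (n : ℕ) (hn : 3 ≤ n) (w : Fin (n - 1) → ℝ) : GG n hn (FF n hn w) = w := by
  funext j
  have hv1 : vv n hn w ⟨1, by omega⟩ = 0 := vv_one n hn w (by omega)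
  have hu1 : uu n ⟨1, by omega⟩ = 1 := if_pos rfl
  show -(uu n (emb n hn j) * vv n hn w ⟨1, by omega⟩
      - vv n hn w (emb n hn j) * uu n ⟨1, by omega⟩) = w j
  rw [hv1, hu1]
  have huj : uu n (emb n hn j) = 0 := by
    refine (if_neg ?_ : (if ((emb n hn j : Fin n) : ℕ) = 1 then (1:ℝ) else 0) = 0)
    rw [emb_val]
    split <;> omega
  have hvj : vv n hn w (emb n hn j) = w j := by
    by_cases hj : (j : ℕ) = 0
    · have he : emb n hn j = ⟨0, by omega⟩ := by
        simp only [emb]; rw [dif_pos hj]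
      rw [he, vv_zero n hn w (by omega)]
      exact congrArg w (Fin.ext (show (0 : ℕ) = (j : ℕ) from hj.symm))
    · have he : emb n hn j = ⟨(j : ℕ) + 1, by have := j.isLt; omega⟩ := by
        simp only [emb]; rw [dif_neg hj]
      rw [he, vv_big n hn w _ (show 2 ≤ (j : ℕ) + 1 by omega)]
      exact congrArg w (Fin.ext (show (j : ℕ) + 1 - 1 = (j : ℕ) by omega))
  rw [huj, hvj]
  ring

lemma GG_lip (n : ℕ) (hn : 3 ≤ n) : LipschitzWith 1 (GG n hn) := by
  intro Q Q'
  rw [ENNReal.coe_one, one_mul]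
  rw [edist_pi_le_iff]
  intro j
  show edist (-(Q (emb n hn j) ⟨1, by omega⟩)) (-(Q' (emb n hn j) ⟨1, by omega⟩)) ≤ _
  rw [edist_neg_neg]
  calc edist (Q (emb n hn j) ⟨1, by omega⟩) (Q' (emb n hn j) ⟨1, by omega⟩)
      ≤ edist (Q (emb n hn j)) (Q' (emb n hn j)) := edist_le_pi_edist _ _ _
    _ ≤ edist Q Q' := edist_le_pi_edist Q Q' _

/-- for `n ≥ 3`, `(N(S_{(n,n)}, 2) ∩ M(n,n)) \ (N0(n,n) ∪ N2(n,n))` is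
non-empty of Hausdorff dimension at least `n − 1`. -/
theorem stmt6 (n : ℕ) (hn : 3 ≤ n) :
    ((rankTwoNull n n ∩ Mexc n n (by omega) (by omega)) \ (N0set n n ∪ N2set n n)).Nonempty ∧
    ((n - 1 : ℕ) : ENNReal) ≤
      dimH ((rankTwoNull n n ∩ Mexc n n (by omega) (by omega)) \ (N0set n n ∪ N2set n n)) := by
  constructor
  · exact ⟨FF n hn (fun _ => 1), FF_mem n hn (fun _ => 1) one_ne_zero one_ne_zero⟩
  · set O : Set (Fin (n - 1) → ℝ) :=
      {w | w ⟨0, by omega⟩ ≠ 0 ∧ w ⟨n - 2, by omega⟩ ≠ 0} with hO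
    have hOopen : IsOpen O := by
      have h1 : IsOpen {w : Fin (n - 1) → ℝ | w ⟨0, by omega⟩ ≠ 0} :=
        isOpen_compl_singleton.preimage (continuous_apply _)
      have h2 : IsOpen {w : Fin (n - 1) → ℝ | w ⟨n - 2, by omega⟩ ≠ 0} :=
        isOpen_compl_singleton.preimage (continuous_apply _)
      exact h1.inter h2
    have hOne : O.Nonempty := ⟨fun _ => 1, one_ne_zero, one_ne_zero⟩
    have hdimO : dimH O = ((n - 1 : ℕ) : ENNReal) := by
      rw [Real.dimH_of_nonempty_interior (by rwa [hOopen.interior_eq])]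
      rw [Module.finrank_fin_fun]
    have hsub : O ⊆ GG n hn '' (FF n hn '' O) := fun w hw =>
      ⟨FF n hn w, ⟨w, hw, rfl⟩, by rw [GG_FF]⟩
    have himg : FF n hn '' O ⊆
        ((rankTwoNull n n ∩ Mexc n n (by omega) (by omega)) \ (N0set n n ∪ N2set n n)) := by
      rintro _ ⟨w, ⟨hw0, hw1⟩, rfl⟩
      exact FF_mem n hn w hw0 hw1
    calc ((n - 1 : ℕ) : ENNReal) = dimH O := hdimO.symm
      _ ≤ dimH (GG n hn '' (FF n hn '' O)) := dimH_mono hsub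
      _ ≤ dimH (FF n hn '' O) := (GG_lip n hn).dimH_image_le _
      _ ≤ _ := dimH_mono himg
end
end
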